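/- arXiv:1710.08165 — 3 statements merged into one kernel-verified Lean document; each statement's English description precedes it below -/
import Mathlib

section
/- (Lemma 5, parts d–f; John weight properties) Let x be in the interior of the polytope K and let w ∈ ℝ^m be a positive vector satisfying the John fixed-point equations w_i = (P_{x,w})_{ii} + β_J for all i ∈ [m]. Then: (d) w_i ∈ [β_J, 1+β_J] for all i ∈ [m]; (e) Σ_{i=1}^m w_i = 3d/2; and (f) the John slack sensitivities satisfy θ_{J_x,i} = a_i^⊤ J_x^{-1} a_i / s_{x,i}² ∈ [0,4] for all i ∈ [m], where J_x = Σ_{i=1}^m w_i a_i a_i^⊤ / s_{x,i}². -/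
open Matrix MeasureTheory Real Set
open scoped ENNReal

noncomputable section

namespace PolytopeWalks

/-- Slackness `s_{x,i} = b_i − a_i^⊤ x`. -/
def slack {d m : ℕ} (A : Matrix (Fin m) (Fin d) ℝ) (b : Fin m → ℝ) (x : Fin d → ℝ)
    (i : Fin m) : ℝ :=
  b i - A.mulVec x i

/-- The polytope `K = {x : A x ≤ b}`. -/
def poly {d m : ℕ} (A : Matrix (Fin m) (Fin d) ℝ) (b : Fin m → ℝ) : Set (Fin d → ℝ) :=
  {x | ∀ i, A.mulVec x i ≤ b i}

/-- The interior of the polytope: all slacks positive. -/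
def interiorPoly {d m : ℕ} (A : Matrix (Fin m) (Fin d) ℝ) (b : Fin m → ℝ) :
    Set (Fin d → ℝ) :=
  {x | ∀ i, 0 < slack A b x i}

/-- Hessian of the logarithmic barrier, `∇²F_x = Σ_i a_i a_i^⊤ / s_{x,i}²`. -/
def logHess {d m : ℕ} (A : Matrix (Fin m) (Fin d) ℝ) (b : Fin m → ℝ) (x : Fin d → ℝ) :
    Matrix (Fin d) (Fin d) ℝ :=
  ∑ i : Fin m, ((slack A b x i) ^ 2)⁻¹ • vecMulVec (A i) (A i)

/-- Leverage scores `σ_{x,i} = a_i^⊤ (∇²F_x)⁻¹ a_i / s_{x,i}²`. -/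
def lev {d m : ℕ} (A : Matrix (Fin m) (Fin d) ℝ) (b : Fin m → ℝ) (x : Fin d → ℝ)
    (i : Fin m) : ℝ :=
  (A i) ⬝ᵥ ((logHess A b x)⁻¹ *ᵥ (A i)) / (slack A b x i) ^ 2

/-- The Vaidya matrix `V_x = Σ_i (σ_{x,i} + d/m) a_i a_i^⊤ / s_{x,i}²`. -/
def vaidyaMat {d m : ℕ} (A : Matrix (Fin m) (Fin d) ℝ) (b : Fin m → ℝ) (x : Fin d → ℝ) :
    Matrix (Fin d) (Fin d) ℝ :=
  ∑ i : Fin m, ((lev A b x i + (d : ℝ) / m) / (slack A b x i) ^ 2) • vecMulVec (A i) (A i)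

/-- Vaidya local norm `‖v‖_{V_x} = (v^⊤ V_x v)^{1/2}`. -/
def vNorm {d m : ℕ} (A : Matrix (Fin m) (Fin d) ℝ) (b : Fin m → ℝ) (x v : Fin d → ℝ) : ℝ :=
  Real.sqrt (v ⬝ᵥ (vaidyaMat A b x *ᵥ v))

/-- Vaidya slack sensitivities `θ_{x,i} = a_i^⊤ V_x⁻¹ a_i / s_{x,i}²`. -/
def thetaV {d m : ℕ} (A : Matrix (Fin m) (Fin d) ℝ) (b : Fin m → ℝ) (x : Fin d → ℝ)
    (i : Fin m) : ℝ :=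
  (A i) ⬝ᵥ ((vaidyaMat A b x)⁻¹ *ᵥ (A i)) / (slack A b x i) ^ 2

/-- Rescaled constraint matrix `A_x = S_x⁻¹ A`. -/
def Amat {d m : ℕ} (A : Matrix (Fin m) (Fin d) ℝ) (b : Fin m → ℝ) (x : Fin d → ℝ) :
    Matrix (Fin m) (Fin d) ℝ :=
  Matrix.of fun i j => A i j / slack A b x i

/-- The projection matrix `P_x = A_x (A_x^⊤ A_x)⁻¹ A_x^⊤` onto the column space of `A_x`. -/
def projMat {d m : ℕ} (A : Matrix (Fin m) (Fin d) ℝ) (b : Fin m → ℝ) (x : Fin d → ℝ) :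
    Matrix (Fin m) (Fin m) ℝ :=
  Amat A b x * (logHess A b x)⁻¹ * (Amat A b x)ᵀ

/-- Entrywise (Hadamard) square of a matrix. -/
def hadSq {n : ℕ} (M : Matrix (Fin n) (Fin n) ℝ) : Matrix (Fin n) (Fin n) ℝ :=
  Matrix.of fun i j => (M i j) ^ 2

/-- `κ = log₂(2m/d)`. -/
def kappaJ (d m : ℕ) : ℝ := Real.logb 2 ((2 * m : ℝ) / d)

/-- `α = 1 − 1/log₂(2m/d)`. -/
def alphaJ (d m : ℕ) : ℝ := 1 - 1 / Real.logb 2 ((2 * m : ℝ) / d)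

/-- `β_J = d/(2m)`. -/
def betaJ (d m : ℕ) : ℝ := (d : ℝ) / (2 * m)

/-- The weighted projection matrix
`P_{x,w} = W^{α/2} A_x (A_x^⊤ W^α A_x)⁻¹ A_x^⊤ W^{α/2}`. -/
def johnProj {d m : ℕ} (A : Matrix (Fin m) (Fin d) ℝ) (b : Fin m → ℝ) (x : Fin d → ℝ)
    (w : Fin m → ℝ) : Matrix (Fin m) (Fin m) ℝ :=
  Matrix.diagonal (fun i => w i ^ (alphaJ d m / 2)) * Amat A b x *
    ((Amat A b x)ᵀ * Matrix.diagonal (fun i => w i ^ alphaJ d m) * Amat A b x)⁻¹ *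
    (Amat A b x)ᵀ * Matrix.diagonal (fun i => w i ^ (alphaJ d m / 2))

/-- `w` is a positive solution of the John fixed-point equations
`w_i = (P_{x,w})_{ii} + β_J` at `x`. -/
def IsJohnWeight {d m : ℕ} (A : Matrix (Fin m) (Fin d) ℝ) (b : Fin m → ℝ) (x : Fin d → ℝ)
    (w : Fin m → ℝ) : Prop :=
  (∀ i, 0 < w i) ∧ ∀ i, w i = johnProj A b x w i i + betaJ d m

/-- The John matrix `J_x = Σ_i w_i a_i a_i^⊤ / s_{x,i}²` built from weights `w`. -/
def johnMat {d m : ℕ} (A : Matrix (Fin m) (Fin d) ℝ) (b : Fin m → ℝ) (x : Fin d → ℝ)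
    (w : Fin m → ℝ) : Matrix (Fin d) (Fin d) ℝ :=
  ∑ i : Fin m, (w i / (slack A b x i) ^ 2) • vecMulVec (A i) (A i)

lemma qform {d m : ℕ} (B : Matrix (Fin m) (Fin d) ℝ) (c : Fin m → ℝ) (u : Fin d → ℝ) :
    u ⬝ᵥ ((Bᵀ * Matrix.diagonal c * B) *ᵥ u) = ∑ i, c i * (B *ᵥ u) i ^ 2 := by
  have h1 : (Bᵀ * Matrix.diagonal c * B) *ᵥ u
      = Bᵀ *ᵥ (Matrix.diagonal c *ᵥ (B *ᵥ u)) := by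
    rw [← Matrix.mulVec_mulVec, ← Matrix.mulVec_mulVec]
  rw [h1, Matrix.mulVec_transpose, dotProduct_comm, ← Matrix.dotProduct_mulVec]
  simp [Matrix.mulVec_diagonal, dotProduct, sq]
  exact Finset.sum_congr rfl fun i _ => by ring

lemma posdef_conj {d m : ℕ} (B : Matrix (Fin m) (Fin d) ℝ) (c : Fin m → ℝ)
    (hc : ∀ i, 0 < c i) (hB : ∀ u, B *ᵥ u = 0 → u = 0) :
    (Bᵀ * Matrix.diagonal c * B).PosDef := by
  refine posDef_iff_dotProduct_mulVec.mpr ⟨?_, ?_⟩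
  · unfold Matrix.IsHermitian
    rw [conjTranspose_eq_transpose_of_trivial, Matrix.transpose_mul, Matrix.transpose_mul,
      Matrix.transpose_transpose, Matrix.diagonal_transpose, Matrix.mul_assoc]
  · intro u hu
    have hs : star u = u := by simp
    rw [hs, qform]
    have hBu : B *ᵥ u ≠ 0 := fun h => hu (hB u h)
    obtain ⟨i, hi⟩ := Function.ne_iff.mp hBu
    refine Finset.sum_pos' (fun j _ => mul_nonneg (hc j).le (sq_nonneg _))
      ⟨i, Finset.mem_univ i, mul_pos (hc i) ?_⟩
    have hne : (B *ᵥ u) i ≠ 0 := hi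
    positivity

lemma inv_qform_le {d : ℕ} (B C : Matrix (Fin d) (Fin d) ℝ) (hB : B.PosDef) (hC : C.PosDef)
    (h : ∀ u, u ⬝ᵥ C *ᵥ u ≤ u ⬝ᵥ B *ᵥ u) (v : Fin d → ℝ) :
    v ⬝ᵥ B⁻¹ *ᵥ v ≤ v ⬝ᵥ C⁻¹ *ᵥ v := by
  have hBdet : IsUnit B.det := hB.det_pos.ne'.isUnit
  have hCdet : IsUnit C.det := hC.det_pos.ne'.isUnit
  have hCt : Cᵀ = C := by
    rw [← conjTranspose_eq_transpose_of_trivial]; exact hC.isHermitian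
  set u := B⁻¹ *ᵥ v with hu
  set p := C⁻¹ *ᵥ v with hp
  have hBu : B *ᵥ u = v := by
    rw [hu, Matrix.mulVec_mulVec, Matrix.mul_nonsing_inv _ hBdet, Matrix.one_mulVec]
  have hCp : C *ᵥ p = v := by
    rw [hp, Matrix.mulVec_mulVec, Matrix.mul_nonsing_inv _ hCdet, Matrix.one_mulVec]
  have huv : u ⬝ᵥ v = v ⬝ᵥ B⁻¹ *ᵥ v := dotProduct_comm u v
  have hubu : u ⬝ᵥ B *ᵥ u = u ⬝ᵥ v := by rw [hBu]
  have hz : 0 ≤ (u - p) ⬝ᵥ C *ᵥ (u - p) := by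
    have := hC.posSemidef.dotProduct_mulVec_nonneg (u - p); simpa using this
  have h1 : u ⬝ᵥ C *ᵥ p = u ⬝ᵥ v := by rw [hCp]
  have h2 : p ⬝ᵥ C *ᵥ u = u ⬝ᵥ v := by
    rw [Matrix.dotProduct_mulVec, ← hCt, Matrix.vecMul_transpose, hCp, dotProduct_comm]
  have h3 : p ⬝ᵥ C *ᵥ p = v ⬝ᵥ C⁻¹ *ᵥ v := by
    rw [hCp, dotProduct_comm]
  have expand : (u - p) ⬝ᵥ C *ᵥ (u - p)
      = u ⬝ᵥ C *ᵥ u - u ⬝ᵥ C *ᵥ p - p ⬝ᵥ C *ᵥ u + p ⬝ᵥ C *ᵥ p := by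
    rw [Matrix.mulVec_sub, dotProduct_sub, sub_dotProduct,
      sub_dotProduct]; ring
  have hcu := h u
  rw [expand, h1, h2, h3] at hz
  linarith [huv, hubu]

lemma rowquad {d m : ℕ} (B : Matrix (Fin m) (Fin d) ℝ) (N : Matrix (Fin d) (Fin d) ℝ)
    (i : Fin m) : (B * N * Bᵀ) i i = B i ⬝ᵥ N *ᵥ B i := by
  simp only [Matrix.mul_apply, Matrix.transpose_apply, dotProduct, Matrix.mulVec,
    Finset.sum_mul]
  rw [Finset.sum_comm]
  refine Finset.sum_congr rfl fun j _ => ?_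
  rw [Finset.mul_sum]
  exact Finset.sum_congr rfl fun k _ => by ring

lemma tri_apply {d m : ℕ} (B : Matrix (Fin m) (Fin d) ℝ) (c : Fin m → ℝ) (j k : Fin d) :
    (Bᵀ * Matrix.diagonal c * B) j k = ∑ i, c i * (B i j * B i k) := by
  rw [Matrix.mul_apply]
  refine Finset.sum_congr rfl fun i _ => ?_
  rw [Matrix.mul_diagonal, Matrix.transpose_apply]; ring

lemma proj_lemma {d m : ℕ} (Bx : Matrix (Fin m) (Fin d) ℝ) (g : Fin m → ℝ)
    (hg : ∀ i, g i ≠ 0) (hB : ∀ u, Bx *ᵥ u = 0 → u = 0)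
    (M : Matrix (Fin d) (Fin d) ℝ) (P : Matrix (Fin m) (Fin m) ℝ)
    (hM : M = Bxᵀ * Matrix.diagonal (fun i => g i ^ 2) * Bx)
    (hP : P = Matrix.diagonal g * Bx * M⁻¹ * Bxᵀ * Matrix.diagonal g) :
    (∀ i, P i i = g i ^ 2 * (Bx i ⬝ᵥ M⁻¹ *ᵥ Bx i)) ∧
    (∀ i, 0 ≤ P i i ∧ P i i ≤ 1) ∧ Matrix.trace P = d := by
  have hc : ∀ i, 0 < g i ^ 2 := fun i => by have := hg i; positivity
  have hMpos : M.PosDef := hM ▸ posdef_conj Bx _ hc hB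
  have hMdet : IsUnit M.det := hMpos.det_pos.ne'.isUnit
  have hMt : Mᵀ = M := by
    rw [← conjTranspose_eq_transpose_of_trivial]; exact hMpos.isHermitian
  subst hM hP
  set M := Bxᵀ * Matrix.diagonal (fun i => g i ^ 2) * Bx with hMdef
  set D := Matrix.diagonal g with hDdef
  set P := D * Bx * M⁻¹ * Bxᵀ * D with hPdef
  have hDD : D * D = Matrix.diagonal (fun i => g i ^ 2) := by
    rw [hDdef, Matrix.diagonal_mul_diagonal]
    exact congrArg Matrix.diagonal (funext fun i => (sq (g i)).symm)
  have hdiag : ∀ i, P i i = g i ^ 2 * (Bx i ⬝ᵥ M⁻¹ *ᵥ Bx i) := by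
    intro i
    have e0 : P = D * (Bx * M⁻¹ * Bxᵀ) * D := by simp only [hPdef, Matrix.mul_assoc]
    rw [e0, Matrix.mul_diagonal, Matrix.diagonal_mul, rowquad]
    ring
  have hnn : ∀ i, 0 ≤ P i i := by
    intro i
    rw [hdiag i]
    have h0 := hMpos.inv.posSemidef.dotProduct_mulVec_nonneg (Bx i)
    simp only [star_trivial] at h0
    exact mul_nonneg (hc i).le h0
  have hDt : Dᵀ = D := by rw [hDdef, Matrix.diagonal_transpose]
  have hPsym : Pᵀ = P := by
    rw [hPdef]
    simp only [Matrix.transpose_mul, hDt, Matrix.transpose_transpose,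
      Matrix.transpose_nonsing_inv, hMt, Matrix.mul_assoc]
  have key : Bxᵀ * (D * (D * (Bx * (M⁻¹ * (Bxᵀ * D))))) = M * (M⁻¹ * (Bxᵀ * D)) := by
    rw [← Matrix.mul_assoc D D, hDD]
    simp only [hMdef, Matrix.mul_assoc]
  have hPP : P * P = P := by
    have e1 : P * P
        = D * (Bx * (M⁻¹ * (Bxᵀ * (D * (D * (Bx * (M⁻¹ * (Bxᵀ * D)))))))) := by
      simp only [hPdef, Matrix.mul_assoc]
    rw [e1, key, ← Matrix.mul_assoc M⁻¹ M, Matrix.nonsing_inv_mul _ hMdet, Matrix.one_mul,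
      hPdef]
    simp only [Matrix.mul_assoc]
  have hle1 : ∀ i, P i i ≤ 1 := by
    intro i
    have hsum : P i i = ∑ j, P i j ^ 2 := by
      conv_lhs => rw [← hPP]
      rw [Matrix.mul_apply]
      refine Finset.sum_congr rfl fun j _ => ?_
      have hji := congrFun (congrFun hPsym i) j
      rw [Matrix.transpose_apply] at hji
      rw [hji, sq]
    have h2 : P i i ^ 2 ≤ ∑ j, P i j ^ 2 :=
      Finset.single_le_sum (f := fun j => P i j ^ 2) (fun j _ => sq_nonneg _)
        (Finset.mem_univ i)
    nlinarith [hnn i]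
  have htr : Matrix.trace P = d := by
    rw [hPdef, Matrix.trace_mul_comm]
    rw [show D * Bx * M⁻¹ * Bxᵀ = D * (Bx * M⁻¹ * Bxᵀ) by simp only [Matrix.mul_assoc],
      ← Matrix.mul_assoc D D, hDD, show Matrix.diagonal (fun i => g i ^ 2) * (Bx * M⁻¹ * Bxᵀ)
        = (Matrix.diagonal (fun i => g i ^ 2) * Bx * M⁻¹) * Bxᵀ by simp only [Matrix.mul_assoc],
      Matrix.trace_mul_comm, show Bxᵀ * (Matrix.diagonal (fun i => g i ^ 2) * Bx * M⁻¹)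
        = M * M⁻¹ by simp only [hMdef, Matrix.mul_assoc],
      Matrix.mul_nonsing_inv _ hMdet, Matrix.trace_one]
    simp
  exact ⟨hdiag, fun i => ⟨hnn i, hle1 i⟩, htr⟩

lemma rank_inj {d m : ℕ} (A : Matrix (Fin m) (Fin d) ℝ) (hrank : A.rank = d) :
    ∀ u : Fin d → ℝ, A *ᵥ u = 0 → u = 0 := by
  intro u hu
  have hker : LinearMap.ker A.mulVecLin = ⊥ := by
    have h1 := LinearMap.finrank_range_add_finrank_ker A.mulVecLin
    rw [show Module.finrank ℝ (LinearMap.range A.mulVecLin) = A.rank from rfl, hrank] at h1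
    simp only [Module.finrank_pi, Fintype.card_fin] at h1
    have h2 : Module.finrank ℝ (LinearMap.ker A.mulVecLin) = 0 := by omega
    exact Submodule.finrank_eq_zero.mp h2
  have hmem : u ∈ LinearMap.ker A.mulVecLin := by
    simpa [Matrix.mulVecLin_apply] using hu
  rw [hker] at hmem
  simpa using hmem


set_option maxHeartbeats 1000000 in
/-- Lemma 5, parts (d)–(f): if `w` is a positive solution of the John fixed-point
equations at an interior point `x`, then `w_i ∈ [β_J, 1+β_J]`, `Σ_i w_i = 3d/2`, and
the John slack sensitivities `a_i^⊤ J_x⁻¹ a_i / s_{x,i}²` lie in `[0,4]`. -/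
theorem lemma5_parts_def (d m : ℕ) (hd : 0 < d) (hdm : d ≤ m)
    (A : Matrix (Fin m) (Fin d) ℝ) (b : Fin m → ℝ) (hrank : A.rank = d)
    (x : Fin d → ℝ) (hx : x ∈ interiorPoly A b)
    (w : Fin m → ℝ) (hw : IsJohnWeight A b x w) :
    (∀ i, w i ∈ Set.Icc (betaJ d m) (1 + betaJ d m)) ∧
    (∑ i, w i = 3 * (d : ℝ) / 2) ∧
    (∀ i, (A i) ⬝ᵥ ((johnMat A b x w)⁻¹ *ᵥ (A i)) / (slack A b x i) ^ 2 ∈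
      Set.Icc (0 : ℝ) 4) := by
  have hs : ∀ i, 0 < slack A b x i := hx
  have hm : 0 < m := lt_of_lt_of_le hd hdm
  have hm0 : (0:ℝ) < m := Nat.cast_pos.mpr hm
  have hd0 : (0:ℝ) < d := Nat.cast_pos.mpr hd
  have hdm' : (d:ℝ) ≤ m := Nat.cast_le.mpr hdm
  have hwpos := hw.1
  set α := alphaJ d m with hα
  set Ax := Amat A b x with hAxdef
  have hAxe : ∀ i j, Ax i j = A i j / slack A b x i := fun i j => rfl
  -- injectivity of Ax
  have hAxinj : ∀ u, Ax *ᵥ u = 0 → u = 0 := by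
    intro u hu
    apply rank_inj A hrank u
    funext i
    have h1 : (Ax *ᵥ u) i = (A *ᵥ u) i / slack A b x i := by
      simp only [Matrix.mulVec, dotProduct, hAxe]
      rw [Finset.sum_div]
      exact Finset.sum_congr rfl fun j _ => by ring
    have h2 := congrFun hu i
    rw [h1] at h2
    simp only [Pi.zero_apply] at h2 ⊢
    rcases div_eq_zero_iff.mp h2 with h | h
    · exact h
    · exact absurd h (hs i).ne'
  -- projection facts
  set g : Fin m → ℝ := fun i => w i ^ (α / 2) with hgdef
  have hg : ∀ i, g i ≠ 0 := fun i => (Real.rpow_pos_of_pos (hwpos i) _).ne'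
  have hg2 : ∀ i, g i ^ 2 = w i ^ α := fun i => by
    rw [hgdef, sq, ← Real.rpow_add (hwpos i), add_halves]
  set M := Axᵀ * Matrix.diagonal (fun i => w i ^ α) * Ax with hMdef
  have hMg : M = Axᵀ * Matrix.diagonal (fun i => g i ^ 2) * Ax := by
    rw [hMdef]
    congr 2
    exact congrArg Matrix.diagonal (funext fun i => (hg2 i).symm)
  have hPdef : johnProj A b x w
      = Matrix.diagonal g * Ax * M⁻¹ * Axᵀ * Matrix.diagonal g := rfl
  obtain ⟨hPdiag, hPbounds, hPtr⟩ := proj_lemma Ax g hg hAxinj M _ hMg hPdef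
  -- basic constants
  have hβpos : 0 < betaJ d m := by unfold betaJ; positivity
  have hβhalf : betaJ d m ≤ 1/2 := by
    unfold betaJ
    rw [div_le_iff₀ (by positivity)]
    linarith
  -- part (d)
  have hwlo : ∀ i, betaJ d m ≤ w i := fun i => by
    have := (hPbounds i).1; rw [hw.2 i]; linarith
  have hwhi : ∀ i, w i ≤ 1 + betaJ d m := fun i => by
    have := (hPbounds i).2; rw [hw.2 i]; linarith
  refine ⟨fun i => ⟨hwlo i, hwhi i⟩, ?_, ?_⟩
  -- part (e)
  · have hsum : ∑ i, w i = ∑ i : Fin m, (johnProj A b x w i i + betaJ d m) :=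
      Finset.sum_congr rfl fun i _ => hw.2 i
    rw [hsum, Finset.sum_add_distrib, Finset.sum_const, Finset.card_univ, Fintype.card_fin,
      nsmul_eq_mul]
    have htr : ∑ i : Fin m, johnProj A b x w i i = (d:ℝ) := by
      rw [← hPtr]; rfl
    rw [htr]
    unfold betaJ
    field_simp
    ring
  -- part (f)
  · -- the exponent facts
    set t := (2 * (m:ℝ)) / d with htdef
    have ht2 : (2:ℝ) ≤ t := by
      rw [htdef, le_div_iff₀ hd0]; linarith
    have ht0 : 0 < t := by linarith
    have hlogt : 0 < Real.log t := Real.log_pos (by linarith)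
    have hαe : 1 - α = Real.log 2 / Real.log t := by
      have h1 : 1 - α = 1 / Real.logb 2 t := by rw [hα]; unfold alphaJ; rw [← htdef]; ring
      rw [h1, Real.logb, one_div_div]
    have he0 : 0 < 1 - α := by
      rw [hαe]; exact div_pos (Real.log_pos one_lt_two) hlogt
    have he1 : 1 - α ≤ 1 := by
      rw [hαe, div_le_one hlogt]
      exact Real.log_le_log two_pos ht2
    have hβt : betaJ d m = t⁻¹ := by unfold betaJ; rw [htdef, inv_div]
    have hbe : betaJ d m ^ (1 - α) = 1/2 := by
      rw [hβt, hαe, Real.rpow_def_of_pos (inv_pos.mpr ht0), Real.log_inv]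
      have hh : -Real.log t * (Real.log 2 / Real.log t) = -Real.log 2 := by
        field_simp
      rw [hh, Real.exp_neg, Real.exp_log two_pos]; norm_num
    have hwα_pos : ∀ i, 0 < w i ^ α := fun i => Real.rpow_pos_of_pos (hwpos i) _
    have hsplit : ∀ i, w i ^ α * w i ^ (1 - α) = w i := fun i => by
      rw [← Real.rpow_add (hwpos i), show α + (1 - α) = 1 by ring, Real.rpow_one]
    have hwe_lo : ∀ i, (1:ℝ)/2 ≤ w i ^ (1 - α) := fun i => by
      rw [← hbe]; exact Real.rpow_le_rpow hβpos.le (hwlo i) he0.le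
    have hwe_hi : ∀ i, w i ^ (1 - α) ≤ 2 := by
      intro i
      rcases le_total (w i) 1 with h | h
      · exact le_trans (Real.rpow_le_one (hwpos i).le h he0.le) one_le_two
      · calc w i ^ (1 - α) ≤ w i ^ (1:ℝ) := Real.rpow_le_rpow_of_exponent_le h he1
          _ = w i := Real.rpow_one _
          _ ≤ 2 := by have := hwhi i; linarith
    have h2w_le : ∀ i, w i ^ α ≤ 2 * w i := by
      intro i
      nlinarith [hsplit i, hwe_lo i, hwα_pos i]
    have h2w_ge : ∀ i, w i ≤ 2 * w i ^ α := by
      intro i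
      nlinarith [hsplit i, hwe_hi i, hwα_pos i]
    -- matrices
    set J := Axᵀ * Matrix.diagonal w * Ax with hJdef
    have hJeq : johnMat A b x w = J := by
      ext j k
      rw [hJdef, tri_apply]
      simp only [johnMat, Matrix.sum_apply, Matrix.smul_apply, Matrix.vecMulVec_apply,
        smul_eq_mul]
      refine Finset.sum_congr rfl fun i _ => ?_
      rw [hAxe, hAxe, div_mul_div_comm, ← pow_two]
      ring
    have hJpos : J.PosDef := hJdef ▸ posdef_conj Ax w hwpos hAxinj
    have hMpos : M.PosDef := hMg ▸ posdef_conj Ax _ (fun i => by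
      have := hg i; positivity) hAxinj
    have hMdet : IsUnit M.det := hMpos.det_pos.ne'.isUnit
    set C := Axᵀ * Matrix.diagonal (fun i => w i ^ α / 2) * Ax with hCdef
    have hCpos : C.PosDef := hCdef ▸ posdef_conj Ax _
      (fun i => by have := hwα_pos i; positivity) hAxinj
    have hCM : C = (2⁻¹ : ℝ) • M := by
      have hdiagsmul : Matrix.diagonal (fun i => w i ^ α / 2)
          = (2⁻¹ : ℝ) • Matrix.diagonal (fun i => w i ^ α) := by
        rw [← Matrix.diagonal_smul]
        exact congrArg Matrix.diagonal (funext fun i => by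
          simp only [Pi.smul_apply, smul_eq_mul]; ring)
      rw [hCdef, hdiagsmul, Matrix.mul_smul, Matrix.smul_mul, hMdef]
    have hCinv : C⁻¹ = (2 : ℝ) • M⁻¹ := by
      letI inst : Invertible (2⁻¹ : ℝ) := invertibleOfNonzero (by norm_num)
      rw [hCM, Matrix.inv_smul M (2⁻¹:ℝ) hMdet]
      congr 1
      rw [invOf_eq_inv]
      norm_num
    have hcomp : ∀ u, u ⬝ᵥ C *ᵥ u ≤ u ⬝ᵥ J *ᵥ u := by
      intro u
      rw [hCdef, hJdef, qform, qform]
      refine Finset.sum_le_sum fun i _ => ?_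
      have := h2w_le i
      nlinarith [sq_nonneg ((Ax *ᵥ u) i)]
    have hkey := inv_qform_le J C hJpos hCpos hcomp
    intro i
    -- relate the statement quantity to θ = Ax i ⬝ᵥ J⁻¹ *ᵥ Ax i
    have hAxi : Ax i = (slack A b x i)⁻¹ • A i := funext fun j => by
      rw [hAxe]; simp [div_eq_inv_mul]
    have hθeq : (A i) ⬝ᵥ ((johnMat A b x w)⁻¹ *ᵥ (A i)) / (slack A b x i) ^ 2
        = Ax i ⬝ᵥ J⁻¹ *ᵥ Ax i := by
      rw [hJeq, hAxi, Matrix.mulVec_smul, dotProduct_smul, smul_dotProduct]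
      simp only [smul_eq_mul]
      ring
    rw [hθeq]
    constructor
    · have h0 := hJpos.inv.posSemidef.dotProduct_mulVec_nonneg (Ax i)
      simp only [star_trivial] at h0
      exact h0
    · -- upper bound
      have hτnn : 0 ≤ Ax i ⬝ᵥ M⁻¹ *ᵥ Ax i := by
        have h0 := hMpos.inv.posSemidef.dotProduct_mulVec_nonneg (Ax i)
        simp only [star_trivial] at h0
        exact h0
      have hτle : Ax i ⬝ᵥ M⁻¹ *ᵥ Ax i ≤ 2 := by
        have hfix := hw.2 i
        rw [hPdiag i, hg2 i] at hfix
        obtain ⟨τ, hτ⟩ : ∃ τ, Ax i ⬝ᵥ M⁻¹ *ᵥ Ax i = τ := ⟨_, rfl⟩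
        obtain ⟨wa, hwa⟩ : ∃ wa, w i ^ α = wa := ⟨_, rfl⟩
        rw [hτ] at hτnn ⊢
        rw [hτ, hwa] at hfix
        have h1 := h2w_ge i
        rw [hwa] at h1
        have h2 := hβpos
        have h3 := hwα_pos i
        rw [hwa] at h3
        nlinarith
      have hC2 : Ax i ⬝ᵥ C⁻¹ *ᵥ Ax i = 2 * (Ax i ⬝ᵥ M⁻¹ *ᵥ Ax i) := by
        rw [hCinv, Matrix.smul_mulVec, dotProduct_smul, smul_eq_mul]
      calc Ax i ⬝ᵥ J⁻¹ *ᵥ Ax i ≤ Ax i ⬝ᵥ C⁻¹ *ᵥ Ax i := hkey (Ax i)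
        _ = 2 * (Ax i ⬝ᵥ M⁻¹ *ᵥ Ax i) := hC2
        _ ≤ 4 := by linarith


end PolytopeWalks
end
end

section
/- (Lemma 7, eigenvalue sandwich for nearby Vaidya matrices) For any scalar t ∈ [0, 1/12] and any pair of points x, y in the interior of K such that ‖x−y‖_{V_x} ≤ t / (md)^{1/4}, one has (1 − 8t/√d) I_d ⪯ V_x^{-1/2} V_y V_x^{-1/2} ⪯ (1 + 8t/√d) I_d, where ⪯ denotes the positive-semidefinite order and I_d is the d×d identity matrix. -/
open Matrix MeasureTheory Real Set
open scoped ENNReal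

noncomputable section

/-- The positive semidefinite square root of a positive semidefinite matrix
(removed from Mathlib; restored with its old definition). -/
def Matrix.PosSemidef.sqrt {n 𝕜 : Type*} [Fintype n] [RCLike 𝕜] [PartialOrder 𝕜] [DecidableEq n]
    {A : Matrix n n 𝕜} (hA : A.PosSemidef) : Matrix n n 𝕜 :=
  (hA.1.eigenvectorUnitary : Matrix n n 𝕜) * diagonal ((↑) ∘ (√·) ∘ hA.1.eigenvalues) *
    (star hA.1.eigenvectorUnitary : Matrix n n 𝕜)

theorem Matrix.PosSemidef.sqrt_mul_self {n : Type*} [Fintype n] [DecidableEq n]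
    {A : Matrix n n ℝ} (hA : A.PosSemidef) : hA.sqrt * hA.sqrt = A := by
  have hU : (star hA.1.eigenvectorUnitary : Matrix n n ℝ) * (hA.1.eigenvectorUnitary : Matrix n n ℝ) = 1 :=
    Unitary.coe_star_mul_self _
  have hD : diagonal ((RCLike.ofReal : ℝ → ℝ) ∘ (√·) ∘ hA.1.eigenvalues) *
      diagonal ((RCLike.ofReal : ℝ → ℝ) ∘ (√·) ∘ hA.1.eigenvalues)
      = diagonal ((RCLike.ofReal : ℝ → ℝ) ∘ hA.1.eigenvalues) := by
    rw [diagonal_mul_diagonal]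
    congr 1
    ext i
    simp [Real.mul_self_sqrt (hA.eigenvalues_nonneg i)]
  conv_rhs => rw [hA.1.spectral_theorem, Unitary.conjStarAlgAut_apply]
  unfold Matrix.PosSemidef.sqrt
  calc _ = (hA.1.eigenvectorUnitary : Matrix n n ℝ) *
        (diagonal ((RCLike.ofReal : ℝ → ℝ) ∘ (√·) ∘ hA.1.eigenvalues) *
          ((star hA.1.eigenvectorUnitary : Matrix n n ℝ) * (hA.1.eigenvectorUnitary : Matrix n n ℝ)) *
          diagonal ((RCLike.ofReal : ℝ → ℝ) ∘ (√·) ∘ hA.1.eigenvalues)) *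
        (star hA.1.eigenvectorUnitary : Matrix n n ℝ) := by simp only [Matrix.mul_assoc]
    _ = _ := by rw [hU, Matrix.mul_one, hD]

theorem Matrix.PosSemidef.posSemidef_sqrt {n : Type*} [Fintype n] [DecidableEq n]
    {A : Matrix n n ℝ} (hA : A.PosSemidef) : hA.sqrt.PosSemidef := by
  have := (Matrix.PosSemidef.diagonal (d := ((RCLike.ofReal : ℝ → ℝ) ∘ (√·) ∘ hA.1.eigenvalues))
    (fun i => Real.sqrt_nonneg _)).mul_mul_conjTranspose_same (hA.1.eigenvectorUnitary : Matrix n n ℝ)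
  unfold Matrix.PosSemidef.sqrt
  rwa [star_eq_conjTranspose]

namespace PolytopeWalks

set_option linter.unusedSectionVars false
set_option maxHeartbeats 1000000

section GenericAux

variable {n : Type*} [Fintype n] [DecidableEq n]

/-- real PSD from symmetric + quadform. -/
lemma psd_of_real {M : Matrix n n ℝ} (hsym : Mᵀ = M) (h : ∀ v, 0 ≤ v ⬝ᵥ M *ᵥ v) :
    M.PosSemidef := by
  refine Matrix.PosSemidef.of_dotProduct_mulVec_nonneg ?_ fun v => by simpa using h v
  rw [Matrix.IsHermitian, conjTranspose_eq_transpose_of_trivial, hsym]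

lemma quad_nonneg {M : Matrix n n ℝ} (hM : M.PosSemidef) (v : n → ℝ) :
    0 ≤ v ⬝ᵥ M *ᵥ v := by simpa using hM.dotProduct_mulVec_nonneg v

lemma quad_pos {M : Matrix n n ℝ} (hM : M.PosDef) {v : n → ℝ} (hv : v ≠ 0) :
    0 < v ⬝ᵥ M *ᵥ v := by simpa using hM.dotProduct_mulVec_pos hv

lemma vecMulVec_mulVec' (a b v : n → ℝ) : vecMulVec a b *ᵥ v = (b ⬝ᵥ v) • a := by
  ext i
  simp only [vecMulVec_apply, Matrix.mulVec, dotProduct, Pi.smul_apply, smul_eq_mul]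
  rw [Finset.sum_mul]
  exact Finset.sum_congr rfl fun j _ => by ring

variable {m : ℕ} {d : ℕ}

lemma sum_mulVec' (f : Fin m → Matrix (Fin d) (Fin d) ℝ) (v : Fin d → ℝ) :
    (∑ i : Fin m, f i) *ᵥ v = ∑ i : Fin m, f i *ᵥ v := by
  ext j
  simp only [Matrix.mulVec, dotProduct, Finset.sum_apply, Matrix.sum_apply, Finset.sum_mul]
  rw [Finset.sum_comm]

lemma dotProduct_sum' (v : Fin d → ℝ) (f : Fin m → (Fin d → ℝ)) :
    v ⬝ᵥ (∑ i : Fin m, f i) = ∑ i : Fin m, v ⬝ᵥ f i := by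
  simp only [dotProduct, Finset.sum_apply, Finset.mul_sum]
  rw [Finset.sum_comm]

lemma quad_wsum (A : Matrix (Fin m) (Fin d) ℝ) (c : Fin m → ℝ) (v : Fin d → ℝ) :
    v ⬝ᵥ ((∑ i : Fin m, c i • vecMulVec (A i) (A i)) *ᵥ v)
      = ∑ i : Fin m, c i * (A i ⬝ᵥ v) ^ 2 := by
  rw [sum_mulVec', dotProduct_sum']
  refine Finset.sum_congr rfl fun i _ => ?_
  rw [smul_mulVec, vecMulVec_mulVec', dotProduct_smul, dotProduct_smul,
    smul_eq_mul, smul_eq_mul, dotProduct_comm]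
  ring

lemma wsum_transpose (A : Matrix (Fin m) (Fin d) ℝ) (c : Fin m → ℝ) :
    (∑ i : Fin m, c i • vecMulVec (A i) (A i))ᵀ
      = ∑ i : Fin m, c i • vecMulVec (A i) (A i) := by
  rw [Matrix.transpose_sum]
  refine Finset.sum_congr rfl fun i _ => ?_
  rw [Matrix.transpose_smul]
  congr 1
  ext j k
  simp [vecMulVec_apply, mul_comm]

lemma wsum_psd (A : Matrix (Fin m) (Fin d) ℝ) {c : Fin m → ℝ} (hc : ∀ i, 0 ≤ c i) :
    (∑ i : Fin m, c i • vecMulVec (A i) (A i)).PosSemidef := by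
  refine psd_of_real (wsum_transpose A c) fun v => ?_
  rw [quad_wsum]
  exact Finset.sum_nonneg fun i _ => mul_nonneg (hc i) (sq_nonneg _)

lemma wsum_sub_psd (A : Matrix (Fin m) (Fin d) ℝ) {c c' : Fin m → ℝ} (h : ∀ i, c i ≤ c' i) :
    ((∑ i : Fin m, c' i • vecMulVec (A i) (A i))
      - ∑ i : Fin m, c i • vecMulVec (A i) (A i)).PosSemidef := by
  rw [← Finset.sum_sub_distrib]
  have : ∀ i ∈ Finset.univ, c' i • vecMulVec (A i) (A i) - c i • vecMulVec (A i) (A i)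
      = (c' i - c i) • vecMulVec (A i) (A i) := fun i _ => (sub_smul _ _ _).symm
  rw [Finset.sum_congr rfl this]
  exact wsum_psd A fun i => sub_nonneg.mpr (h i)

lemma smul_wsum (A : Matrix (Fin m) (Fin d) ℝ) (k : ℝ) (c : Fin m → ℝ) :
    k • (∑ i : Fin m, c i • vecMulVec (A i) (A i))
      = ∑ i : Fin m, (k * c i) • vecMulVec (A i) (A i) := by
  rw [Finset.smul_sum]
  exact Finset.sum_congr rfl fun i _ => (smul_smul _ _ _)

lemma symm_of_hermitian {M : Matrix n n ℝ} (h : M.IsHermitian) : Mᵀ = M := by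
  rw [← conjTranspose_eq_transpose_of_trivial]; exact h

lemma dot_mulVec_symm {M : Matrix n n ℝ} (h : Mᵀ = M) (u w : n → ℝ) :
    u ⬝ᵥ (M *ᵥ w) = (M *ᵥ u) ⬝ᵥ w := by
  rw [dotProduct_mulVec, ← mulVec_transpose, h]

lemma inv_sub_inv_psd {A B : Matrix n n ℝ} (hA : A.PosDef) (hB : B.PosDef)
    (hAB : (A - B).PosSemidef) : (B⁻¹ - A⁻¹).PosSemidef := by
  have hAd : IsUnit A.det := hA.det_pos.ne'.isUnit
  have hBd : IsUnit B.det := hB.det_pos.ne'.isUnit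
  have hBs : Bᵀ = B := symm_of_hermitian hB.isHermitian
  have hBis : (B⁻¹)ᵀ = B⁻¹ := symm_of_hermitian hB.isHermitian.inv
  have hAis : (A⁻¹)ᵀ = A⁻¹ := symm_of_hermitian hA.isHermitian.inv
  refine psd_of_real (by rw [Matrix.transpose_sub, hBis, hAis]) fun v => ?_
  set u := A⁻¹ *ᵥ v with hu
  have hAu : A *ᵥ u = v := by
    rw [hu, Matrix.mulVec_mulVec, Matrix.mul_nonsing_inv _ hAd, Matrix.one_mulVec]
  have hBv : B *ᵥ (B⁻¹ *ᵥ v) = v := by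
    rw [Matrix.mulVec_mulVec, Matrix.mul_nonsing_inv _ hBd, Matrix.one_mulVec]
  set w := u - B⁻¹ *ᵥ v with hw
  have h1 : 0 ≤ w ⬝ᵥ B *ᵥ w := quad_nonneg hB.posSemidef w
  have h2 : 0 ≤ u ⬝ᵥ (A - B) *ᵥ u := quad_nonneg hAB u
  have hBw : B *ᵥ w = B *ᵥ u - v := by rw [hw, Matrix.mulVec_sub, hBv]
  have eq1 : w ⬝ᵥ B *ᵥ w = u ⬝ᵥ B *ᵥ u - u ⬝ᵥ v - u ⬝ᵥ v + v ⬝ᵥ B⁻¹ *ᵥ v := by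
    rw [hBw, hw, dotProduct_sub, sub_dotProduct, sub_dotProduct,
      dot_mulVec_symm hBs (B⁻¹ *ᵥ v) u, hBv, dotProduct_comm v u,
      dotProduct_comm (B⁻¹ *ᵥ v) v]
    ring
  have eq2 : u ⬝ᵥ (A - B) *ᵥ u = u ⬝ᵥ v - u ⬝ᵥ B *ᵥ u := by
    rw [Matrix.sub_mulVec, dotProduct_sub, hAu]
  have eq3 : v ⬝ᵥ (B⁻¹ - A⁻¹) *ᵥ v = v ⬝ᵥ B⁻¹ *ᵥ v - u ⬝ᵥ v := by
    rw [Matrix.sub_mulVec, dotProduct_sub, ← hu, dotProduct_comm v u]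
  linarith

lemma cauchy_schwarz_pd {M : Matrix n n ℝ} (hM : M.PosDef) (a v : n → ℝ) :
    (a ⬝ᵥ v) ^ 2 ≤ (a ⬝ᵥ M⁻¹ *ᵥ a) * (v ⬝ᵥ M *ᵥ v) := by
  have hMd : IsUnit M.det := hM.det_pos.ne'.isUnit
  have hMs : Mᵀ = M := symm_of_hermitian hM.isHermitian
  by_cases hz : a ⬝ᵥ M⁻¹ *ᵥ a = 0
  · have ha : a = 0 := by
      by_contra h0
      exact (quad_pos hM.inv h0).ne' hz
    simp [ha]
  · set u := M⁻¹ *ᵥ a with hu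
    have hMu : M *ᵥ u = a := by
      rw [hu, Matrix.mulVec_mulVec, Matrix.mul_nonsing_inv _ hMd, Matrix.one_mulVec]
    have hq' : u ⬝ᵥ a = a ⬝ᵥ u := dotProduct_comm u a
    have hqpos : 0 < a ⬝ᵥ u := lt_of_le_of_ne (quad_nonneg hM.inv.posSemidef a) (Ne.symm hz)
    set q : ℝ := a ⬝ᵥ u with hqdef
    set c : ℝ := (a ⬝ᵥ v) / q with hc
    have h1 : 0 ≤ (v - c • u) ⬝ᵥ M *ᵥ (v - c • u) := quad_nonneg hM.posSemidef _
    have expand : (v - c • u) ⬝ᵥ M *ᵥ (v - c • u)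
        = v ⬝ᵥ M *ᵥ v - 2 * c * (a ⬝ᵥ v) + c ^ 2 * q := by
      simp only [Matrix.mulVec_sub, Matrix.mulVec_smul, dotProduct_sub, sub_dotProduct,
        dotProduct_smul, smul_dotProduct, smul_eq_mul, hMu]
      rw [dot_mulVec_symm hMs u v, hMu, hq', dotProduct_comm v a]
      ring
    rw [expand] at h1
    have key : q * (v ⬝ᵥ M *ᵥ v - 2 * c * (a ⬝ᵥ v) + c ^ 2 * q)
        = q * (v ⬝ᵥ M *ᵥ v) - (a ⬝ᵥ v) ^ 2 := by
      rw [hc]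
      field_simp
      first
      | (ring_nf; simp)
      | ring_nf
      | simp
    nlinarith [mul_nonneg hqpos.le h1]


end GenericAux

section DomainAux

variable {d m : ℕ}

lemma mulVec_inj {A : Matrix (Fin m) (Fin d) ℝ} (hrank : A.rank = d) {v : Fin d → ℝ}
    (hv : A *ᵥ v = 0) : v = 0 := by
  have h := LinearMap.finrank_range_add_finrank_ker A.mulVecLin
  rw [Module.finrank_fintype_fun_eq_card, Fintype.card_fin] at h
  have hr : Module.finrank ℝ (LinearMap.range A.mulVecLin) = d := hrank
  have hker : Module.finrank ℝ (LinearMap.ker A.mulVecLin) = 0 := by omega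
  have hbot : LinearMap.ker A.mulVecLin = ⊥ := Submodule.finrank_eq_zero.mp hker
  have : v ∈ LinearMap.ker A.mulVecLin := by
    simp [LinearMap.mem_ker, Matrix.mulVecLin_apply, hv]
  rw [hbot] at this
  simpa using this

lemma logHess_posDef {A : Matrix (Fin m) (Fin d) ℝ} {b : Fin m → ℝ} (hrank : A.rank = d)
    {x : Fin d → ℝ} (hx : x ∈ interiorPoly A b) : (logHess A b x).PosDef := by
  refine Matrix.PosDef.of_dotProduct_mulVec_pos ?_ fun v hv => ?_
  · rw [Matrix.IsHermitian, conjTranspose_eq_transpose_of_trivial, logHess, wsum_transpose]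
  · have hAv : A *ᵥ v ≠ 0 := fun h => hv (mulVec_inj hrank h)
    obtain ⟨i, hi⟩ : ∃ i, (A *ᵥ v) i ≠ 0 := by
      by_contra h
      push_neg at h
      exact hAv (funext h)
    have hi' : A i ⬝ᵥ v ≠ 0 := hi
    show 0 < star v ⬝ᵥ (logHess A b x *ᵥ v)
    rw [star_trivial, logHess, quad_wsum]
    refine Finset.sum_pos' (fun j _ => ?_) ⟨i, Finset.mem_univ i, ?_⟩
    · exact mul_nonneg (inv_nonneg.mpr (sq_nonneg _)) (sq_nonneg _)
    · exact mul_pos (inv_pos.mpr (pow_pos (hx i) 2)) (pow_two_pos_of_ne_zero hi')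

lemma lev_nonneg {A : Matrix (Fin m) (Fin d) ℝ} {b : Fin m → ℝ} (hrank : A.rank = d)
    {x : Fin d → ℝ} (hx : x ∈ interiorPoly A b) (i : Fin m) : 0 ≤ lev A b x i :=
  div_nonneg (quad_nonneg (logHess_posDef hrank hx).inv.posSemidef (A i)) (sq_nonneg _)

lemma vaidya_posDef {A : Matrix (Fin m) (Fin d) ℝ} {b : Fin m → ℝ} (hd : 0 < d) (hdm : d ≤ m)
    (hrank : A.rank = d) {x : Fin d → ℝ} (hx : x ∈ interiorPoly A b) :
    (vaidyaMat A b x).PosDef := by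
  have hm : 0 < m := lt_of_lt_of_le hd hdm
  have hbeta : 0 < (d : ℝ) / m := by positivity
  refine Matrix.PosDef.of_dotProduct_mulVec_pos ?_ fun v hv => ?_
  · rw [Matrix.IsHermitian, conjTranspose_eq_transpose_of_trivial, vaidyaMat, wsum_transpose]
  · have hAv : A *ᵥ v ≠ 0 := fun h => hv (mulVec_inj hrank h)
    obtain ⟨i, hi⟩ : ∃ i, (A *ᵥ v) i ≠ 0 := by
      by_contra h
      push_neg at h
      exact hAv (funext h)
    have hi' : A i ⬝ᵥ v ≠ 0 := hi
    show 0 < star v ⬝ᵥ (vaidyaMat A b x *ᵥ v)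
    rw [star_trivial, vaidyaMat, quad_wsum]
    refine Finset.sum_pos' (fun j _ => ?_) ⟨i, Finset.mem_univ i, ?_⟩
    · exact mul_nonneg (div_nonneg (by linarith [lev_nonneg hrank hx j]) (sq_nonneg _))
        (sq_nonneg _)
    · refine mul_pos (div_pos (by linarith [lev_nonneg hrank hx i]) (pow_pos (hx i) 2))
        (pow_two_pos_of_ne_zero hi')

lemma smul_inv' {M : Matrix (Fin d) (Fin d) ℝ} (hM : IsUnit M.det) {k : ℝ} (hk : k ≠ 0) :
    (k • M)⁻¹ = k⁻¹ • M⁻¹ := by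
  apply Matrix.inv_eq_right_inv
  rw [Matrix.smul_mul, Matrix.mul_smul, smul_smul, Matrix.mul_nonsing_inv _ hM,
    mul_inv_cancel₀ hk, one_smul]

lemma smul_posDef {M : Matrix (Fin d) (Fin d) ℝ} (hM : M.PosDef) {k : ℝ} (hk : 0 < k) :
    (k • M).PosDef := by
  refine Matrix.PosDef.of_dotProduct_mulVec_pos ?_ fun v hv => ?_
  · rw [Matrix.IsHermitian, conjTranspose_eq_transpose_of_trivial, Matrix.transpose_smul,
      symm_of_hermitian hM.isHermitian]
  · have := quad_pos hM hv
    show 0 < star v ⬝ᵥ ((k • M) *ᵥ v)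
    rw [star_trivial, smul_mulVec, dotProduct_smul, smul_eq_mul]
    exact mul_pos hk this

/-- Key bound: `a_i^T V_x^{-1} a_i ≤ (√m/√d) s_{x,i}^2`. -/
lemma PV_bound {A : Matrix (Fin m) (Fin d) ℝ} {b : Fin m → ℝ} (hd : 0 < d) (hdm : d ≤ m)
    (hrank : A.rank = d) {x : Fin d → ℝ} (hx : x ∈ interiorPoly A b) (i : Fin m) :
    A i ⬝ᵥ (vaidyaMat A b x)⁻¹ *ᵥ A i
      ≤ (Real.sqrt m / Real.sqrt d) * slack A b x i ^ 2 := by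
  have hm : 0 < m := lt_of_lt_of_le hd hdm
  set β : ℝ := (d : ℝ) / m with hβ
  have hbeta : 0 < β := by positivity
  set V := vaidyaMat A b x with hVdef
  set H := logHess A b x with hHdef
  have hV : V.PosDef := vaidya_posDef hd hdm hrank hx
  have hH : H.PosDef := logHess_posDef hrank hx
  have hVd : IsUnit V.det := hV.det_pos.ne'.isUnit
  have hHd : IsUnit H.det := hH.det_pos.ne'.isUnit
  set PV : ℝ := A i ⬝ᵥ V⁻¹ *ᵥ A i with hPVdef
  set PH : ℝ := A i ⬝ᵥ H⁻¹ *ᵥ A i with hPHdef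
  have hPVn : 0 ≤ PV := quad_nonneg hV.inv.posSemidef (A i)
  have hPHn : 0 ≤ PH := quad_nonneg hH.inv.posSemidef (A i)
  set s : ℝ := slack A b x i with hsdef
  have hs : 0 < s := hx i
  set σ : ℝ := lev A b x i with hσdef
  have hσ : σ = PH / s ^ 2 := rfl
  have hσn : 0 ≤ σ := lev_nonneg hrank hx i
  -- Step 1: PV * ((σ + β)/s^2) ≤ 1
  have step1 : PV * ((σ + β) / s ^ 2) ≤ 1 := by
    set u := V⁻¹ *ᵥ A i with hu
    have hVu : V *ᵥ u = A i := by
      rw [hu, Matrix.mulVec_mulVec, Matrix.mul_nonsing_inv _ hVd, Matrix.one_mulVec]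
    have hq : u ⬝ᵥ V *ᵥ u = PV := by
      rw [hVu, dotProduct_comm, hPVdef, hu]
    have hAu : A i ⬝ᵥ u = PV := rfl
    have hquad : u ⬝ᵥ V *ᵥ u = ∑ j : Fin m, ((lev A b x j + β) / slack A b x j ^ 2) * (A j ⬝ᵥ u) ^ 2 := by
      rw [hVdef, vaidyaMat, quad_wsum]
    have hterm : ((σ + β) / s ^ 2) * PV ^ 2 ≤ u ⬝ᵥ V *ᵥ u := by
      rw [hquad]
      have := Finset.single_le_sum (f := fun j => ((lev A b x j + β) / slack A b x j ^ 2) * (A j ⬝ᵥ u) ^ 2)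
        (fun j _ => mul_nonneg (div_nonneg (by linarith [lev_nonneg hrank hx j]) (sq_nonneg _)) (sq_nonneg _))
        (Finset.mem_univ i)
      calc ((σ + β) / s ^ 2) * PV ^ 2
          = ((lev A b x i + β) / slack A b x i ^ 2) * (A i ⬝ᵥ u) ^ 2 := by rw [hAu, hσdef, hsdef]
        _ ≤ _ := this
    rw [hq] at hterm
    rcases eq_or_lt_of_le hPVn with h0 | h0
    · rw [← h0]; norm_num
    · have hcoef : 0 ≤ (σ + β) / s ^ 2 := div_nonneg (by linarith) (sq_nonneg _)
      nlinarith
  -- Step 2: PV ≤ β⁻¹ * PH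
  have step2 : PV ≤ β⁻¹ * PH := by
    have hsub : (V - β • H).PosSemidef := by
      rw [hVdef, hHdef, vaidyaMat, logHess, smul_wsum]
      refine wsum_sub_psd A fun j => ?_
      rw [mul_comm, inv_mul_eq_div]
      gcongr
      have := lev_nonneg hrank hx j
      rw [hβ]
      linarith
    have hanti := inv_sub_inv_psd hV (smul_posDef hH hbeta) hsub
    have hq := quad_nonneg hanti (A i)
    rw [Matrix.sub_mulVec, dotProduct_sub, smul_inv' hHd hbeta.ne', smul_mulVec,
      dotProduct_smul, smul_eq_mul] at hq
    linarith
  -- combine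
  have hPH : PH = σ * s ^ 2 := by rw [hσ]; field_simp
  have key : PV ^ 2 * β ≤ s ^ 4 := by
    have h1 : PV * σ ≤ s ^ 2 := by
      have : PV * ((σ + β) / s ^ 2) * s ^ 2 ≤ 1 * s ^ 2 :=
        mul_le_mul_of_nonneg_right step1 (sq_nonneg s)
      have heq : PV * ((σ + β) / s ^ 2) * s ^ 2 = PV * (σ + β) := by
        field_simp
      nlinarith [mul_nonneg hPVn hbeta.le]
    have h2 : PV * β ≤ PH := by
      have := mul_le_mul_of_nonneg_left step2 hbeta.le
      rw [← mul_assoc, mul_inv_cancel₀ hbeta.ne', one_mul] at this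
      linarith [this]
    nlinarith [mul_le_mul_of_nonneg_left h2 hPVn, hPH, mul_le_mul_of_nonneg_left h1 hPHn]
  have hK : (Real.sqrt m / Real.sqrt d) ^ 2 = (m : ℝ) / d := by
    rw [div_pow, Real.sq_sqrt (Nat.cast_nonneg m), Real.sq_sqrt (Nat.cast_nonneg d)]
  have hKpos : 0 < Real.sqrt m / Real.sqrt d := by
    apply div_pos <;> [exact Real.sqrt_pos.mpr (by positivity); exact Real.sqrt_pos.mpr (by positivity)]
  have hfin : PV ^ 2 ≤ ((Real.sqrt m / Real.sqrt d) * s ^ 2) ^ 2 := by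
    have hβm : β = (d : ℝ) / m := hβ
    have : PV ^ 2 ≤ s ^ 4 / β := by
      rw [le_div_iff₀ hbeta]
      linarith
    calc PV ^ 2 ≤ s ^ 4 / β := this
      _ = ((Real.sqrt m / Real.sqrt d) * s ^ 2) ^ 2 := by
          rw [mul_pow, hK, hβm]
          field_simp
  nlinarith [mul_nonneg hKpos.le (sq_nonneg s)]


theorem main_thm (hd : 0 < d) (hdm : d ≤ m)
    (A : Matrix (Fin m) (Fin d) ℝ) (b : Fin m → ℝ) (hrank : A.rank = d)
    (t : ℝ) (ht : t ∈ Set.Icc (0 : ℝ) (1 / 12))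
    (x y : Fin d → ℝ) (hx : x ∈ interiorPoly A b) (hy : y ∈ interiorPoly A b)
    (hnear : Real.sqrt ((x - y) ⬝ᵥ (vaidyaMat A b x *ᵥ (x - y))) ≤ t / ((m : ℝ) * d) ^ ((1 : ℝ) / 4))
    (hpsd : (vaidyaMat A b x).PosSemidef) :
    (hpsd.sqrt⁻¹ * vaidyaMat A b y * hpsd.sqrt⁻¹ -
        (1 - 8 * t / Real.sqrt d) • (1 : Matrix (Fin d) (Fin d) ℝ)).PosSemidef ∧
    ((1 + 8 * t / Real.sqrt d) • (1 : Matrix (Fin d) (Fin d) ℝ) -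
        hpsd.sqrt⁻¹ * vaidyaMat A b y * hpsd.sqrt⁻¹).PosSemidef := by
  have hm : 0 < m := lt_of_lt_of_le hd hdm
  have hd1 : (1:ℝ) ≤ (d:ℝ) := by exact_mod_cast hd
  have hsd1 : (1:ℝ) ≤ Real.sqrt d := by
    rw [show (1:ℝ) = Real.sqrt 1 by simp]
    exact Real.sqrt_le_sqrt hd1
  have hsdpos : (0:ℝ) < Real.sqrt d := lt_of_lt_of_le one_pos hsd1
  set δ : ℝ := t / Real.sqrt d with hδdef
  have hδ0 : 0 ≤ δ := div_nonneg ht.1 hsdpos.le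
  have hδ12 : δ ≤ 1/12 := le_trans (div_le_self ht.1 hsd1) ht.2
  have hmd : (0:ℝ) < (m:ℝ) * d := by positivity
  have hsm : (0:ℝ) < Real.sqrt m := Real.sqrt_pos.mpr (by positivity)
  set β : ℝ := (d:ℝ) / m with hβdef
  have hβpos : 0 < β := by positivity
  have hVpd := vaidya_posDef hd hdm hrank hx
  -- bound on the squared norm
  set q : ℝ := (x - y) ⬝ᵥ (vaidyaMat A b x *ᵥ (x - y)) with hqdef
  have hq0 : 0 ≤ q := quad_nonneg hpsd (x - y)
  have hqle : q ≤ t^2 / (Real.sqrt m * Real.sqrt d) := by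
    have h2 : q ≤ (t / ((m:ℝ)*d) ^ ((1:ℝ)/4))^2 := by
      nlinarith [Real.sq_sqrt hq0, Real.sqrt_nonneg q, hnear]
    have h3 : (t / ((m:ℝ)*d) ^ ((1:ℝ)/4))^2 = t^2 / (Real.sqrt m * Real.sqrt d) := by
      rw [div_pow, ← Real.rpow_natCast (((m:ℝ)*d) ^ ((1:ℝ)/4)) 2, ← Real.rpow_mul hmd.le]
      norm_num
      rw [← Real.sqrt_eq_rpow, Real.sqrt_mul (Nat.cast_nonneg m)]
    linarith [h3 ▸ h2]
  -- slack perturbation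
  have hdiff : ∀ i, slack A b y i = slack A b x i + A i ⬝ᵥ (x - y) := by
    intro i
    show b i - A i ⬝ᵥ y = b i - A i ⬝ᵥ x + A i ⬝ᵥ (x - y)
    rw [dotProduct_sub]
    ring
  have hsq : ∀ i, (A i ⬝ᵥ (x - y))^2 ≤ (δ * slack A b x i)^2 := by
    intro i
    have hcs := cauchy_schwarz_pd hVpd (A i) (x - y)
    have hPV := PV_bound hd hdm hrank hx i
    have hPVn : 0 ≤ A i ⬝ᵥ (vaidyaMat A b x)⁻¹ *ᵥ A i :=
      quad_nonneg hVpd.inv.posSemidef (A i)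
    calc (A i ⬝ᵥ (x - y))^2
        ≤ (A i ⬝ᵥ (vaidyaMat A b x)⁻¹ *ᵥ A i) * q := hcs
      _ ≤ ((Real.sqrt m / Real.sqrt d) * slack A b x i ^ 2) * q :=
          mul_le_mul_of_nonneg_right hPV hq0
      _ ≤ ((Real.sqrt m / Real.sqrt d) * slack A b x i ^ 2) * (t^2 / (Real.sqrt m * Real.sqrt d)) := by
          apply mul_le_mul_of_nonneg_left hqle (by positivity)
      _ = (δ * slack A b x i)^2 := by
          have hdd2 : Real.sqrt d ^ 2 = (d:ℝ) := Real.sq_sqrt (Nat.cast_nonneg d)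
          rw [hδdef]
          field_simp
  have hslo : ∀ i, (1 - δ) * slack A b x i ≤ slack A b y i := by
    intro i
    have h := hsq i
    have hsx := hx i
    rw [hdiff i]
    nlinarith [sq_nonneg (A i ⬝ᵥ (x - y) + δ * slack A b x i), mul_nonneg hδ0 hsx.le]
  have hshi : ∀ i, slack A b y i ≤ (1 + δ) * slack A b x i := by
    intro i
    have h := hsq i
    have hsx := hx i
    rw [hdiff i]
    nlinarith [sq_nonneg (A i ⬝ᵥ (x - y) - δ * slack A b x i), mul_nonneg hδ0 hsx.le]
  have h1δ : (0:ℝ) < 1 - δ := by linarith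
  have h2δ : (0:ℝ) < 1 + δ := by linarith
  -- Hessian sandwich
  have hHx := logHess_posDef hrank hx
  have hHy := logHess_posDef hrank hy
  have hHup : (((1-δ)^2)⁻¹ • logHess A b x - logHess A b y).PosSemidef := by
    rw [logHess, logHess, smul_wsum]
    refine wsum_sub_psd A fun i => ?_
    have hsx := hx i
    have hsy := hy i
    have hle : ((1-δ) * slack A b x i)^2 ≤ slack A b y i ^ 2 := by
      nlinarith [hslo i, mul_pos h1δ hsx]
    rw [← mul_inv, ← mul_pow]
    exact inv_anti₀ (by positivity) hle
  have hHlow : (logHess A b y - ((1+δ)^2)⁻¹ • logHess A b x).PosSemidef := by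
    rw [logHess, logHess, smul_wsum]
    refine wsum_sub_psd A fun i => ?_
    have hsx := hx i
    have hsy := hy i
    have hle : slack A b y i ^ 2 ≤ ((1+δ) * slack A b x i)^2 := by
      nlinarith [hshi i, hsy]
    rw [← mul_inv, ← mul_pow]
    exact inv_anti₀ (by positivity) hle
  -- leverage numerator sandwich
  have hPup : ∀ i, A i ⬝ᵥ (logHess A b y)⁻¹ *ᵥ A i
      ≤ (1+δ)^2 * (A i ⬝ᵥ (logHess A b x)⁻¹ *ᵥ A i) := by
    intro i
    have hBpd : (((1+δ)^2)⁻¹ • logHess A b x).PosDef := smul_posDef hHx (by positivity)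
    have h := inv_sub_inv_psd hHy hBpd hHlow
    have hinv : (((1+δ)^2)⁻¹ • logHess A b x)⁻¹ = (1+δ)^2 • (logHess A b x)⁻¹ := by
      rw [smul_inv' hHx.det_pos.ne'.isUnit (by positivity), inv_inv]
    rw [hinv] at h
    have hq := quad_nonneg h (A i)
    rw [Matrix.sub_mulVec, dotProduct_sub, smul_mulVec, dotProduct_smul, smul_eq_mul] at hq
    linarith
  have hPlow : ∀ i, (1-δ)^2 * (A i ⬝ᵥ (logHess A b x)⁻¹ *ᵥ A i)
      ≤ A i ⬝ᵥ (logHess A b y)⁻¹ *ᵥ A i := by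
    intro i
    have hApd : (((1-δ)^2)⁻¹ • logHess A b x).PosDef := smul_posDef hHx (by positivity)
    have h := inv_sub_inv_psd hApd hHy hHup
    have hinv : (((1-δ)^2)⁻¹ • logHess A b x)⁻¹ = (1-δ)^2 • (logHess A b x)⁻¹ := by
      rw [smul_inv' hHx.det_pos.ne'.isUnit (by positivity), inv_inv]
    rw [hinv] at h
    have hq := quad_nonneg h (A i)
    rw [Matrix.sub_mulVec, dotProduct_sub, smul_mulVec, dotProduct_smul, smul_eq_mul] at hq
    linarith
  -- coefficient comparison for the Vaidya matrices
  have hcoefU : ∀ i, (lev A b y i + (d:ℝ)/m) / slack A b y i ^ 2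
      ≤ (1 + 8*δ) * ((lev A b x i + (d:ℝ)/m) / slack A b x i ^ 2) := by
    intro i
    have hsx := hx i
    have hsy := hy i
    set PX : ℝ := A i ⬝ᵥ (logHess A b x)⁻¹ *ᵥ A i with hPX
    set PY : ℝ := A i ⬝ᵥ (logHess A b y)⁻¹ *ᵥ A i with hPY
    have hPXn : 0 ≤ PX := quad_nonneg hHx.inv.posSemidef (A i)
    set sx : ℝ := slack A b x i
    set sy : ℝ := slack A b y i
    have e1 : (lev A b y i + (d:ℝ)/m) / sy ^ 2 = (PY + β * sy^2) / sy^4 := by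
      show (PY / sy^2 + (d:ℝ)/m) / sy ^ 2 = (PY + β * sy^2) / sy^4
      rw [hβdef]
      have hsyne : sy ≠ 0 := hsy.ne'
      have hsxne : sx ≠ 0 := hsx.ne'
      have hmne : (m:ℝ) ≠ 0 := by positivity
      field_simp
    have e2 : (lev A b x i + (d:ℝ)/m) / sx ^ 2 = (PX + β * sx^2) / sx^4 := by
      show (PX / sx^2 + (d:ℝ)/m) / sx ^ 2 = (PX + β * sx^2) / sx^4
      rw [hβdef]
      have hsyne : sy ≠ 0 := hsy.ne'
      have hsxne : sx ≠ 0 := hsx.ne'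
      have hmne : (m:ℝ) ≠ 0 := by positivity
      field_simp
    rw [e1, e2, ← mul_div_assoc, div_le_div_iff₀ (by positivity) (by positivity)]
    -- goal: (PY + β*sy^2) * sx^4 ≤ (1+8δ) * ((PX + β*sx^2) * sy^4)
    have hsy2 : sy^2 ≤ ((1+δ)*sx)^2 := pow_le_pow_left₀ hsy.le (hshi i) 2
    have hA1 : PY + β*sy^2 ≤ (1+δ)^2 * (PX + β*sx^2) := by
      nlinarith [hPup i, mul_le_mul_of_nonneg_left hsy2 hβpos.le]
    have hB1 : (1-δ)^4 * sx^4 ≤ sy^4 := by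
      have h4 := pow_le_pow_left₀ (mul_pos h1δ hsx).le (hslo i) 4
      rw [mul_pow] at h4
      exact h4
    have hb : (0:ℝ) ≤ 1/12 - δ := by linarith
    have hS1 : (1+δ)^2 ≤ (1+8*δ) * (1-δ)^4 := by
      nlinarith [hδ0, hb, mul_nonneg hδ0 hb, mul_nonneg (mul_nonneg hδ0 hb) hb,
        mul_nonneg (mul_nonneg (mul_nonneg hδ0 hb) hb) hb,
        mul_nonneg (mul_nonneg (mul_nonneg (mul_nonneg hδ0 hb) hb) hb) hb]
    have hPXβ : 0 ≤ PX + β*sx^2 := by positivity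
    calc (PY + β*sy^2) * sx^4
        ≤ ((1+δ)^2 * (PX + β*sx^2)) * sx^4 := mul_le_mul_of_nonneg_right hA1 (by positivity)
      _ ≤ (((1+8*δ) * (1-δ)^4) * (PX + β*sx^2)) * sx^4 :=
          mul_le_mul_of_nonneg_right (mul_le_mul_of_nonneg_right hS1 hPXβ) (by positivity)
      _ = ((1+8*δ) * (PX + β*sx^2)) * ((1-δ)^4 * sx^4) := by ring
      _ ≤ ((1+8*δ) * (PX + β*sx^2)) * sy^4 := by
          apply mul_le_mul_of_nonneg_left hB1
          positivity
      _ = (1+8*δ) * (PX + β*sx^2) * sy^4 := by ring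
  have hcoefL : ∀ i, (1 - 8*δ) * ((lev A b x i + (d:ℝ)/m) / slack A b x i ^ 2)
      ≤ (lev A b y i + (d:ℝ)/m) / slack A b y i ^ 2 := by
    intro i
    have hsx := hx i
    have hsy := hy i
    set PX : ℝ := A i ⬝ᵥ (logHess A b x)⁻¹ *ᵥ A i with hPX
    set PY : ℝ := A i ⬝ᵥ (logHess A b y)⁻¹ *ᵥ A i with hPY
    have hPXn : 0 ≤ PX := quad_nonneg hHx.inv.posSemidef (A i)
    set sx : ℝ := slack A b x i
    set sy : ℝ := slack A b y i
    have e1 : (lev A b y i + (d:ℝ)/m) / sy ^ 2 = (PY + β * sy^2) / sy^4 := by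
      show (PY / sy^2 + (d:ℝ)/m) / sy ^ 2 = (PY + β * sy^2) / sy^4
      rw [hβdef]
      have hsyne : sy ≠ 0 := hsy.ne'
      have hsxne : sx ≠ 0 := hsx.ne'
      have hmne : (m:ℝ) ≠ 0 := by positivity
      field_simp
    have e2 : (lev A b x i + (d:ℝ)/m) / sx ^ 2 = (PX + β * sx^2) / sx^4 := by
      show (PX / sx^2 + (d:ℝ)/m) / sx ^ 2 = (PX + β * sx^2) / sx^4
      rw [hβdef]
      have hsyne : sy ≠ 0 := hsy.ne'
      have hsxne : sx ≠ 0 := hsx.ne'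
      have hmne : (m:ℝ) ≠ 0 := by positivity
      field_simp
    rw [e1, e2, ← mul_div_assoc, div_le_div_iff₀ (by positivity) (by positivity)]
    -- goal: (1-8δ) * (PX + β*sx^2) * sy^4 ≤ (PY + β*sy^2) * sx^4
    have hsx2 : ((1-δ)*sx)^2 ≤ sy^2 := pow_le_pow_left₀ (mul_pos h1δ hsx).le (hslo i) 2
    have hA1 : (1-δ)^2 * (PX + β*sx^2) ≤ PY + β*sy^2 := by
      nlinarith [hPlow i, mul_le_mul_of_nonneg_left hsx2 hβpos.le]
    have hB1 : sy^4 ≤ (1+δ)^4 * sx^4 := by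
      have h4 := pow_le_pow_left₀ hsy.le (hshi i) 4
      rw [mul_pow] at h4
      exact h4
    have hS1 : (1-8*δ) * (1+δ)^4 ≤ (1-δ)^2 := by
      nlinarith [hδ0, mul_nonneg hδ0 hδ0, mul_nonneg (mul_nonneg hδ0 hδ0) hδ0,
        mul_nonneg (mul_nonneg (mul_nonneg hδ0 hδ0) hδ0) hδ0,
        mul_nonneg (mul_nonneg (mul_nonneg (mul_nonneg hδ0 hδ0) hδ0) hδ0) hδ0]
    have hPXβ : 0 ≤ PX + β*sx^2 := by positivity
    have hPYn : 0 ≤ PY := quad_nonneg hHy.inv.posSemidef (A i)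
    rcases le_or_gt (1-8*δ) 0 with hneg | hposc
    · calc (1-8*δ) * (PX + β*sx^2) * sy^4
          ≤ 0 := mul_nonpos_of_nonpos_of_nonneg
            (mul_nonpos_of_nonpos_of_nonneg hneg hPXβ) (by positivity)
        _ ≤ (PY + β*sy^2) * sx^4 :=
            mul_nonneg (add_nonneg hPYn (mul_nonneg hβpos.le (sq_nonneg sy))) (by positivity)
    · calc (1-8*δ) * (PX + β*sx^2) * sy^4
          ≤ (1-8*δ) * (PX + β*sx^2) * ((1+δ)^4 * sx^4) := by
            apply mul_le_mul_of_nonneg_left hB1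
            positivity
        _ = ((1-8*δ) * (1+δ)^4) * (PX + β*sx^2) * sx^4 := by ring
        _ ≤ (1-δ)^2 * (PX + β*sx^2) * sx^4 := by
            apply mul_le_mul_of_nonneg_right (mul_le_mul_of_nonneg_right hS1 hPXβ)
            positivity
        _ ≤ (PY + β*sy^2) * sx^4 := mul_le_mul_of_nonneg_right hA1 (by positivity)
  -- matrix sandwich
  have hVup : ((1 + 8*δ) • vaidyaMat A b x - vaidyaMat A b y).PosSemidef := by
    rw [vaidyaMat, vaidyaMat, smul_wsum]
    exact wsum_sub_psd A fun i => hcoefU i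
  have hVlow : (vaidyaMat A b y - (1 - 8*δ) • vaidyaMat A b x).PosSemidef := by
    rw [vaidyaMat, vaidyaMat, smul_wsum]
    exact wsum_sub_psd A fun i => hcoefL i
  -- conjugation by the inverse square root
  set S := hpsd.sqrt with hSdef
  have hS2 : S * S = vaidyaMat A b x := hpsd.sqrt_mul_self
  have hdetS : IsUnit S.det := by
    refine isUnit_iff_ne_zero.mpr fun h0 => ?_
    have h2 : S.det * S.det = (vaidyaMat A b x).det := by rw [← Matrix.det_mul, hS2]
    rw [h0, mul_zero] at h2
    exact hVpd.det_pos.ne' h2.symm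
  have hSisym : (S⁻¹)ᵀ = S⁻¹ := symm_of_hermitian hpsd.posSemidef_sqrt.isHermitian.inv
  have hone : S⁻¹ * vaidyaMat A b x * S⁻¹ = 1 := by
    rw [← hS2]
    simp only [← Matrix.mul_assoc]
    rw [Matrix.nonsing_inv_mul _ hdetS, Matrix.one_mul, Matrix.mul_nonsing_inv _ hdetS]
  have conj : ∀ M : Matrix (Fin d) (Fin d) ℝ, M.PosSemidef → (S⁻¹ * M * S⁻¹).PosSemidef := by
    intro M hM
    have := hM.mul_mul_conjTranspose_same S⁻¹
    rwa [conjTranspose_eq_transpose_of_trivial, hSisym] at this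
  have hscal : 8 * t / Real.sqrt d = 8 * δ := by rw [hδdef, mul_div_assoc]
  constructor
  · have h := conj _ hVlow
    have heq : S⁻¹ * (vaidyaMat A b y - (1 - 8*δ) • vaidyaMat A b x) * S⁻¹
        = S⁻¹ * vaidyaMat A b y * S⁻¹ - (1 - 8*δ) • (1 : Matrix (Fin d) (Fin d) ℝ) := by
      rw [Matrix.mul_sub, Matrix.sub_mul, Matrix.mul_smul, Matrix.smul_mul, hone]
    rw [heq] at h
    rw [hscal]
    exact h
  · have h := conj _ hVup
    have heq : S⁻¹ * ((1 + 8*δ) • vaidyaMat A b x - vaidyaMat A b y) * S⁻¹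
        = (1 + 8*δ) • (1 : Matrix (Fin d) (Fin d) ℝ) - S⁻¹ * vaidyaMat A b y * S⁻¹ := by
      rw [Matrix.mul_sub, Matrix.sub_mul, Matrix.mul_smul, Matrix.smul_mul, hone]
    rw [heq] at h
    rw [hscal]
    exact h

end DomainAux

/-- Lemma 7 (eigenvalue sandwich for nearby Vaidya matrices): if
`‖x−y‖_{V_x} ≤ t/(md)^{1/4}` with `t ∈ [0,1/12]`, then
`(1 − 8t/√d) I ⪯ V_x^{-1/2} V_y V_x^{-1/2} ⪯ (1 + 8t/√d) I` in the PSD order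
(here `V_x^{-1/2}` is the inverse of the PSD square root of `V_x`). -/
theorem lemma7_eigenvalue_sandwich (d m : ℕ) (hd : 0 < d) (hdm : d ≤ m)
    (A : Matrix (Fin m) (Fin d) ℝ) (b : Fin m → ℝ) (hrank : A.rank = d)
    (t : ℝ) (ht : t ∈ Set.Icc (0 : ℝ) (1 / 12))
    (x y : Fin d → ℝ) (hx : x ∈ interiorPoly A b) (hy : y ∈ interiorPoly A b)
    (hnear : vNorm A b x (x - y) ≤ t / ((m : ℝ) * d) ^ ((1 : ℝ) / 4))
    (hpsd : (vaidyaMat A b x).PosSemidef) :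
    (hpsd.sqrt⁻¹ * vaidyaMat A b y * hpsd.sqrt⁻¹ -
        (1 - 8 * t / Real.sqrt d) • (1 : Matrix (Fin d) (Fin d) ℝ)).PosSemidef ∧
    ((1 + 8 * t / Real.sqrt d) • (1 : Matrix (Fin d) (Fin d) ℝ) -
        hpsd.sqrt⁻¹ * vaidyaMat A b y * hpsd.sqrt⁻¹).PosSemidef := by
  exact main_thm hd hdm A b hrank t ht x y hx hy hnear hpsd

end PolytopeWalks
end
end

section
/- (Lemma 10, slackness varies slowly in the Vaidya local norm) For all points x, y in the interior of K and every i ∈ [m], one has |1 − s_{y,i}/s_{x,i}| ≤ (m/d)^{1/4} · ‖x − y‖_{V_x}. -/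
open Matrix MeasureTheory Real Set
open scoped ENNReal

noncomputable section

namespace PolytopeWalks

section Aux
variable {d m : ℕ}


lemma mulVec_sum_smul (c : Fin m → ℝ) (a : Fin m → Fin d → ℝ) (v : Fin d → ℝ) (j : Fin d) :
    ((∑ i, c i • vecMulVec (a i) (a i)) *ᵥ v) j = ∑ i, c i * (a i ⬝ᵥ v) * a i j := by
  simp only [Matrix.mulVec, dotProduct, Matrix.sum_apply, Matrix.smul_apply,
    Matrix.vecMulVec_apply, smul_eq_mul, Finset.sum_mul, Finset.mul_sum]
  rw [Finset.sum_comm (s := (Finset.univ : Finset (Fin d))) (t := (Finset.univ : Finset (Fin m)))]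
  refine Finset.sum_congr rfl fun i _ => Finset.sum_congr rfl fun k _ => by ring

lemma quadform_eq (c : Fin m → ℝ) (a : Fin m → Fin d → ℝ) (u v : Fin d → ℝ) :
    u ⬝ᵥ ((∑ i, c i • vecMulVec (a i) (a i)) *ᵥ v)
      = ∑ i, c i * (a i ⬝ᵥ u) * (a i ⬝ᵥ v) := by
  calc u ⬝ᵥ ((∑ i, c i • vecMulVec (a i) (a i)) *ᵥ v)
      = ∑ j, ∑ i, u j * (c i * (a i ⬝ᵥ v) * a i j) := by
        refine Finset.sum_congr rfl fun j _ => ?_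
        rw [mulVec_sum_smul, Finset.mul_sum]
    _ = ∑ i, ∑ j, u j * (c i * (a i ⬝ᵥ v) * a i j) :=
        Finset.sum_comm
    _ = ∑ i, c i * (a i ⬝ᵥ u) * (a i ⬝ᵥ v) := by
        refine Finset.sum_congr rfl fun i _ => ?_
        have h1 : ∑ j, u j * (c i * (a i ⬝ᵥ v) * a i j)
            = (c i * (a i ⬝ᵥ v)) * ∑ j, a i j * u j := by
          rw [Finset.mul_sum]
          exact Finset.sum_congr rfl fun j _ => by ring
        have h2 : ∑ j, a i j * u j = a i ⬝ᵥ u := rfl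
        rw [h1, h2]; ring

/-- Hermitian-ness of sums of scaled outer products. -/
lemma sum_smul_isHermitian (c : Fin m → ℝ) (a : Fin m → Fin d → ℝ) :
    (∑ i, c i • vecMulVec (a i) (a i)).IsHermitian := by
  unfold Matrix.IsHermitian
  ext j k
  simp [Matrix.conjTranspose_apply, Matrix.sum_apply, Matrix.smul_apply,
    Matrix.vecMulVec_apply, mul_comm]

/-- Symmetry of the bilinear form of a Hermitian real matrix. -/
lemma herm_bilin_symm {M : Matrix (Fin d) (Fin d) ℝ} (hM : M.IsHermitian)
    (x y : Fin d → ℝ) : x ⬝ᵥ (M *ᵥ y) = y ⬝ᵥ (M *ᵥ x) := by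
  have hMt : Mᵀ = M := by
    have := hM.eq
    rwa [Matrix.conjTranspose_eq_transpose_of_trivial] at this
  rw [Matrix.dotProduct_mulVec, ← hMt, Matrix.vecMul_transpose, dotProduct_comm, hMt]

/-- Cauchy–Schwarz for a positive definite matrix. -/
lemma posdef_cauchy_schwarz {M : Matrix (Fin d) (Fin d) ℝ} (hM : M.PosDef)
    (a v : Fin d → ℝ) :
    (a ⬝ᵥ v) ^ 2 ≤ (a ⬝ᵥ (M⁻¹ *ᵥ a)) * (v ⬝ᵥ (M *ᵥ v)) := by
  have hdet : IsUnit M.det := isUnit_iff_ne_zero.mpr hM.det_pos.ne'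
  have hMw : M *ᵥ (M⁻¹ *ᵥ a) = a := by
    rw [Matrix.mulVec_mulVec, Matrix.mul_nonsing_inv M hdet, Matrix.one_mulVec]
  set w := M⁻¹ *ᵥ a with hw
  by_cases hv : v = 0
  · subst hv; simp
  · have hα : 0 < v ⬝ᵥ (M *ᵥ v) := by
      have := hM.dotProduct_mulVec_pos hv
      simpa using this
    set α := v ⬝ᵥ (M *ᵥ v)
    set t := (a ⬝ᵥ v) / α with ht
    have hq : 0 ≤ (w - t • v) ⬝ᵥ (M *ᵥ (w - t • v)) := by
      have := hM.posSemidef.dotProduct_mulVec_nonneg (w - t • v)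
      simpa using this
    have hwMw : w ⬝ᵥ (M *ᵥ w) = a ⬝ᵥ (M⁻¹ *ᵥ a) := by
      rw [hMw, dotProduct_comm]
    have hvMw : v ⬝ᵥ (M *ᵥ w) = a ⬝ᵥ v := by rw [hMw, dotProduct_comm]
    have hwMv : w ⬝ᵥ (M *ᵥ v) = a ⬝ᵥ v := by
      rw [herm_bilin_symm hM.1, hvMw]
    have hexp : (w - t • v) ⬝ᵥ (M *ᵥ (w - t • v))
        = a ⬝ᵥ (M⁻¹ *ᵥ a) - 2 * t * (a ⬝ᵥ v) + t ^ 2 * α := by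
      rw [Matrix.mulVec_sub, Matrix.mulVec_smul, sub_dotProduct, dotProduct_sub,
        dotProduct_sub, smul_dotProduct, dotProduct_smul, dotProduct_smul,
        smul_dotProduct, hwMw, hvMw, hwMv]
      simp only [smul_eq_mul]
      ring
    have ht2 : t * α = a ⬝ᵥ v := div_mul_cancel₀ _ hα.ne'
    have key : 0 ≤ a ⬝ᵥ (M⁻¹ *ᵥ a) - (a ⬝ᵥ v) ^ 2 / α := by
      have : a ⬝ᵥ (M⁻¹ *ᵥ a) - 2 * t * (a ⬝ᵥ v) + t ^ 2 * α
          = a ⬝ᵥ (M⁻¹ *ᵥ a) - (a ⬝ᵥ v) ^ 2 / α := by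
        field_simp [ht]
        rw [← ht2]; ring
      rw [this] at hexp; rw [← this]; rw [this]; exact hexp ▸ hq
    have := (div_le_iff₀ hα).mp (by linarith : (a ⬝ᵥ v) ^ 2 / α ≤ a ⬝ᵥ (M⁻¹ *ᵥ a))
    linarith


lemma mulVec_eq_zero_of_rank {A : Matrix (Fin m) (Fin d) ℝ} (hrank : A.rank = d)
    {v : Fin d → ℝ} (h : A *ᵥ v = 0) : v = 0 := by
  have hker : LinearMap.ker A.mulVecLin = ⊥ := by
    have h1 := LinearMap.finrank_range_add_finrank_ker A.mulVecLin
    have h2 : Module.finrank ℝ (Fin d → ℝ) = d := by simp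
    have h3 : Module.finrank ℝ (LinearMap.range A.mulVecLin) = d := hrank
    have h4 : Module.finrank ℝ (LinearMap.ker A.mulVecLin) = 0 := by omega
    exact Submodule.finrank_eq_zero.mp h4
  have hv : v ∈ LinearMap.ker A.mulVecLin := by
    simpa [LinearMap.mem_ker, Matrix.mulVecLin_apply] using h
  rwa [hker, Submodule.mem_bot] at hv

end Aux

/-- Lemma 10: for all interior points `x, y` and every constraint `i`,
`|1 − s_{y,i}/s_{x,i}| ≤ (m/d)^{1/4} ‖x−y‖_{V_x}`. -/
theorem lemma10_slackness_slowly_varying (d m : ℕ) (hd : 0 < d) (hdm : d ≤ m)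
    (A : Matrix (Fin m) (Fin d) ℝ) (b : Fin m → ℝ) (hrank : A.rank = d)
    (x y : Fin d → ℝ) (hx : x ∈ interiorPoly A b) (hy : y ∈ interiorPoly A b) :
    ∀ i, |1 - slack A b y i / slack A b x i| ≤
      ((m : ℝ) / d) ^ ((1 : ℝ) / 4) * vNorm A b x (x - y) := by
  -- setup
  have hm : 0 < m := lt_of_lt_of_le hd hdm
  have hβ : 0 < (d : ℝ) / m := div_pos (by exact_mod_cast hd) (by exact_mod_cast hm)
  set β : ℝ := (d : ℝ) / m with hβdef
  -- positive definiteness of the log-barrier Hessian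
  have hHpd : (logHess A b x).PosDef := by
    refine Matrix.PosDef.of_dotProduct_mulVec_pos (sum_smul_isHermitian _ _) fun v hv => ?_
    have hAv : A *ᵥ v ≠ 0 := fun hz => hv (mulVec_eq_zero_of_rank hrank hz)
    obtain ⟨i0, hi0⟩ : ∃ i0, (A *ᵥ v) i0 ≠ 0 := by
      by_contra hc
      push_neg at hc
      exact hAv (funext hc)
    have hsx : ∀ i, 0 < slack A b x i := hx
    have : (star v) ⬝ᵥ ((logHess A b x) *ᵥ v) = ∑ i, ((slack A b x i) ^ 2)⁻¹ * (A i ⬝ᵥ v) * (A i ⬝ᵥ v) := by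
      rw [star_trivial]
      exact quadform_eq _ _ v v
    rw [this]
    refine Finset.sum_pos' (fun i _ => ?_) ⟨i0, Finset.mem_univ _, ?_⟩
    · have := mul_self_nonneg (A i ⬝ᵥ v)
      have h2 : (0:ℝ) ≤ ((slack A b x i) ^ 2)⁻¹ := inv_nonneg.mpr (sq_nonneg _)
      rw [mul_assoc]; exact mul_nonneg h2 this
    · have hne : A i0 ⬝ᵥ v ≠ 0 := hi0
      have h2 : (0:ℝ) < ((slack A b x i0) ^ 2)⁻¹ :=
        inv_pos.mpr (pow_pos (hsx i0) 2)
      rw [mul_assoc]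
      exact mul_pos h2 (mul_self_pos.mpr hne)
  -- leverage scores are nonnegative
  have hlev : ∀ j, 0 ≤ lev A b x j := by
    intro j
    have hinv : (logHess A b x)⁻¹.PosSemidef := hHpd.inv.posSemidef
    have h2 := hinv.dotProduct_mulVec_nonneg (A j)
    rw [star_trivial] at h2
    exact div_nonneg h2 (sq_nonneg _)
  have hVeq : vaidyaMat A b x
      = ∑ j, ((lev A b x j + (d : ℝ) / m) / (slack A b x j) ^ 2) • vecMulVec (A j) (A j) := rfl
  have hHeq : logHess A b x
      = ∑ j, ((slack A b x j) ^ 2)⁻¹ • vecMulVec (A j) (A j) := rfl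
  -- Vaidya matrix is positive definite
  have hcpos : ∀ j, 0 < (lev A b x j + (d : ℝ) / m) / (slack A b x j) ^ 2 := fun j =>
    div_pos (by linarith [hlev j]) (pow_pos (hx j) 2)
  have hVpd : (vaidyaMat A b x).PosDef := by
    refine Matrix.PosDef.of_dotProduct_mulVec_pos (by rw [hVeq]; exact sum_smul_isHermitian _ _) fun v hv => ?_
    obtain ⟨i0, hi0⟩ : ∃ i0, (A *ᵥ v) i0 ≠ 0 := by
      by_contra hc; push_neg at hc
      exact hv (mulVec_eq_zero_of_rank hrank (funext hc))
    have hq : (star v) ⬝ᵥ ((vaidyaMat A b x) *ᵥ v)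
        = ∑ j, ((lev A b x j + (d : ℝ) / m) / (slack A b x j) ^ 2) * (A j ⬝ᵥ v) * (A j ⬝ᵥ v) := by
      rw [star_trivial, hVeq]; exact quadform_eq _ _ v v
    rw [hq]
    refine Finset.sum_pos' (fun j _ => ?_) ⟨i0, Finset.mem_univ _, ?_⟩
    · rw [mul_assoc]
      exact mul_nonneg (hcpos j).le (mul_self_nonneg _)
    · rw [mul_assoc]
      exact mul_pos (hcpos i0) (mul_self_pos.mpr hi0)
  -- now the main argument
  intro i
  set v : Fin d → ℝ := x - y with hv
  have hsx := hx i
  have hsy := hy i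
  -- rewrite the left-hand side
  have hslack : slack A b x i - slack A b y i = -(A i ⬝ᵥ v) := by
    have hvv : A i ⬝ᵥ v = (A *ᵥ v) i := rfl
    simp only [slack, hvv, hv, Matrix.mulVec_sub, Pi.sub_apply]
    rw [show A i ⬝ᵥ (x - y) = (A *ᵥ (x - y)) i from rfl, Matrix.mulVec_sub, Pi.sub_apply]
    ring
  have habs : |1 - slack A b y i / slack A b x i| = |A i ⬝ᵥ v| / slack A b x i := by
    have h1 : (1 : ℝ) - slack A b y i / slack A b x i
        = (slack A b x i - slack A b y i) / slack A b x i := by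
      field_simp
    rw [h1, hslack, abs_div, abs_neg, abs_of_pos hsx]
  -- abbreviations
  have hdet : IsUnit (vaidyaMat A b x).det := isUnit_iff_ne_zero.mpr hVpd.det_pos.ne'
  set w : Fin d → ℝ := (vaidyaMat A b x)⁻¹ *ᵥ A i with hwdef
  have hVw : vaidyaMat A b x *ᵥ w = A i := by
    rw [hwdef, Matrix.mulVec_mulVec, Matrix.mul_nonsing_inv _ hdet, Matrix.one_mulVec]
  set T : ℝ := A i ⬝ᵥ w with hTdef
  have hT0 : 0 ≤ T := by
    have h2 := hVpd.inv.posSemidef.dotProduct_mulVec_nonneg (A i)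
    rw [star_trivial] at h2
    exact h2
  set q : ℝ := v ⬝ᵥ (vaidyaMat A b x *ᵥ v) with hqdef
  have hq0 : 0 ≤ q := by
    have h2 := hVpd.posSemidef.dotProduct_mulVec_nonneg v
    rw [star_trivial] at h2
    exact h2
  have hCS : (A i ⬝ᵥ v) ^ 2 ≤ T * q := posdef_cauchy_schwarz hVpd (A i) v
  have hs2 : (0:ℝ) < (slack A b x i) ^ 2 := pow_pos hsx 2
  -- bound 1 : (σ + β) θ ≤ 1
  have hwVw : w ⬝ᵥ (vaidyaMat A b x *ᵥ w) = T := by rw [hVw, hTdef, dotProduct_comm]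
  have hsum : w ⬝ᵥ (vaidyaMat A b x *ᵥ w)
      = ∑ j, ((lev A b x j + (d : ℝ) / m) / (slack A b x j) ^ 2) * (A j ⬝ᵥ w) * (A j ⬝ᵥ w) := by
    rw [hVeq]; exact quadform_eq _ _ w w
  have hterm : ((lev A b x i + (d : ℝ) / m) / (slack A b x i) ^ 2) * T * T ≤ T := by
    calc ((lev A b x i + (d : ℝ) / m) / (slack A b x i) ^ 2) * T * T
        = ((lev A b x i + (d : ℝ) / m) / (slack A b x i) ^ 2) * (A i ⬝ᵥ w) * (A i ⬝ᵥ w) := by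
          rw [hTdef]
      _ ≤ ∑ j, ((lev A b x j + (d : ℝ) / m) / (slack A b x j) ^ 2) * (A j ⬝ᵥ w) * (A j ⬝ᵥ w) := by
          refine Finset.single_le_sum (f := fun j => ((lev A b x j + (d : ℝ) / m) / (slack A b x j) ^ 2) * (A j ⬝ᵥ w) * (A j ⬝ᵥ w)) (fun j _ => ?_) (Finset.mem_univ i)
          show 0 ≤ ((lev A b x j + (d : ℝ) / m) / (slack A b x j) ^ 2) * (A j ⬝ᵥ w) * (A j ⬝ᵥ w)
          rw [mul_assoc]
          exact mul_nonneg (hcpos j).le (mul_self_nonneg _)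
      _ = T := by rw [← hsum, hwVw]
  have hθ1 : (lev A b x i + (d : ℝ) / m) * (T / (slack A b x i) ^ 2) ≤ 1 := by
    rcases hT0.eq_or_lt with h | h
    · rw [← h]; simp
    · have := hterm
      rw [div_mul_eq_mul_div, div_mul_eq_mul_div, div_le_iff₀ hs2] at this
      have h2 : (lev A b x i + (d : ℝ) / m) * T ≤ (slack A b x i) ^ 2 := by
        nlinarith
      rw [mul_div_assoc'] at *
      rw [div_le_one hs2]
      linarith [h2]
  -- bound 2 : β θ ≤ σ
  have hwHw0 : 0 ≤ w ⬝ᵥ (logHess A b x *ᵥ w) := by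
    have h2 := hHpd.posSemidef.dotProduct_mulVec_nonneg w
    rw [star_trivial] at h2
    exact h2
  have hHVsum : ((d : ℝ) / m) * (w ⬝ᵥ (logHess A b x *ᵥ w)) ≤ T := by
    have h1 : w ⬝ᵥ (logHess A b x *ᵥ w)
        = ∑ j, ((slack A b x j) ^ 2)⁻¹ * (A j ⬝ᵥ w) * (A j ⬝ᵥ w) := by
      rw [hHeq]; exact quadform_eq _ _ w w
    rw [h1, Finset.mul_sum, ← hwVw, hsum]
    refine Finset.sum_le_sum fun j _ => ?_
    have hAw := mul_self_nonneg (A j ⬝ᵥ w)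
    have hc : (d : ℝ) / m * ((slack A b x j) ^ 2)⁻¹
        ≤ (lev A b x j + (d : ℝ) / m) / (slack A b x j) ^ 2 := by
      rw [div_eq_mul_inv]
      exact mul_le_mul_of_nonneg_right (by linarith [hlev j]) (inv_nonneg.mpr (sq_nonneg _))
    calc (d : ℝ) / m * (((slack A b x j) ^ 2)⁻¹ * (A j ⬝ᵥ w) * (A j ⬝ᵥ w))
        = ((d : ℝ) / m * ((slack A b x j) ^ 2)⁻¹) * ((A j ⬝ᵥ w) * (A j ⬝ᵥ w)) := by ring
      _ ≤ ((lev A b x j + (d : ℝ) / m) / (slack A b x j) ^ 2) * ((A j ⬝ᵥ w) * (A j ⬝ᵥ w)) :=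
          mul_le_mul_of_nonneg_right hc hAw
      _ = ((lev A b x j + (d : ℝ) / m) / (slack A b x j) ^ 2) * (A j ⬝ᵥ w) * (A j ⬝ᵥ w) := by ring
  have hCS2 : T ^ 2 ≤ (lev A b x i * (slack A b x i) ^ 2) * (w ⬝ᵥ (logHess A b x *ᵥ w)) := by
    have h2 := posdef_cauchy_schwarz hHpd (A i) w
    have h3 : A i ⬝ᵥ ((logHess A b x)⁻¹ *ᵥ A i) = lev A b x i * (slack A b x i) ^ 2 := by
      rw [lev, div_mul_cancel₀ _ hs2.ne']
    rw [h3, ← hTdef] at h2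
    exact h2
  have hθ2 : ((d : ℝ) / m) * (T / (slack A b x i) ^ 2) ≤ lev A b x i := by
    rcases hT0.eq_or_lt with h | h
    · rw [← h]; simpa using hlev i
    · have h4 : ((d : ℝ) / m) * T ^ 2 ≤ (lev A b x i * (slack A b x i) ^ 2) * T := by
        calc ((d : ℝ) / m) * T ^ 2 ≤ ((d : ℝ) / m) * ((lev A b x i * (slack A b x i) ^ 2) * (w ⬝ᵥ (logHess A b x *ᵥ w))) := by
              exact mul_le_mul_of_nonneg_left hCS2 hβ.le
          _ = (lev A b x i * (slack A b x i) ^ 2) * (((d : ℝ) / m) * (w ⬝ᵥ (logHess A b x *ᵥ w))) := by ring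
          _ ≤ (lev A b x i * (slack A b x i) ^ 2) * T :=
              mul_le_mul_of_nonneg_left hHVsum (mul_nonneg (hlev i) hs2.le)
      have h5 : ((d : ℝ) / m) * T ≤ lev A b x i * (slack A b x i) ^ 2 := by nlinarith
      rw [show ((d : ℝ) / m) * (T / (slack A b x i) ^ 2)
          = (((d : ℝ) / m) * T) / (slack A b x i) ^ 2 from by ring, div_le_iff₀ hs2]
      linarith
  -- θ ≤ √(m/d)
  have hθ : T / (slack A b x i) ^ 2 ≤ Real.sqrt ((m : ℝ) / d) := by
    set θ := T / (slack A b x i) ^ 2 with hθdef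
    have hθ0 : 0 ≤ θ := div_nonneg hT0 hs2.le
    have hsb : 0 < Real.sqrt ((d : ℝ) / m) := Real.sqrt_pos.mpr hβ
    have hmd : (m : ℝ) / d = ((d : ℝ) / m)⁻¹ := by
      rw [inv_div]
    have hsqmd : Real.sqrt ((m : ℝ) / d) = 1 / Real.sqrt ((d : ℝ) / m) := by
      rw [hmd, Real.sqrt_inv, one_div]
    rw [hsqmd]
    by_cases hσ : lev A b x i ≤ Real.sqrt ((d : ℝ) / m)
    · have h1 : θ ≤ lev A b x i / ((d : ℝ) / m) := by
        rw [le_div_iff₀ hβ]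
        calc θ * ((d : ℝ) / m) = ((d : ℝ) / m) * θ := by ring
          _ ≤ lev A b x i := hθ2
      have h2 : lev A b x i / ((d : ℝ) / m) ≤ Real.sqrt ((d : ℝ) / m) / ((d : ℝ) / m) :=
        div_le_div_of_nonneg_right hσ hβ.le
      have h3 : Real.sqrt ((d : ℝ) / m) / ((d : ℝ) / m) = 1 / Real.sqrt ((d : ℝ) / m) := by
        rw [div_eq_div_iff hβ.ne' hsb.ne', one_mul]
        exact Real.mul_self_sqrt hβ.le
      linarith
    · push_neg at hσ
      have hσpos : 0 < lev A b x i := lt_trans hsb hσ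
      have h1 : θ ≤ 1 / (lev A b x i + (d : ℝ) / m) := by
        rw [le_div_iff₀ (by linarith)]
        calc θ * (lev A b x i + (d : ℝ) / m) = (lev A b x i + (d : ℝ) / m) * θ := by ring
          _ ≤ 1 := hθ1
      have h2 : 1 / (lev A b x i + (d : ℝ) / m) ≤ 1 / Real.sqrt ((d : ℝ) / m) := by
        apply one_div_le_one_div_of_le hsb
        linarith
      linarith
  -- finish
  rw [habs]
  have hVnorm : vNorm A b x v = Real.sqrt q := rfl
  have hmd0 : (0:ℝ) ≤ (m : ℝ) / d := div_nonneg (Nat.cast_nonneg m) (Nat.cast_nonneg d)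
  calc |A i ⬝ᵥ v| / slack A b x i
      = Real.sqrt ((|A i ⬝ᵥ v| / slack A b x i) ^ 2) :=
        (Real.sqrt_sq (by positivity)).symm
    _ = Real.sqrt ((A i ⬝ᵥ v) ^ 2 / (slack A b x i) ^ 2) := by rw [div_pow, sq_abs]
    _ ≤ Real.sqrt (Real.sqrt ((m : ℝ) / d) * q) := by
        apply Real.sqrt_le_sqrt
        calc (A i ⬝ᵥ v) ^ 2 / (slack A b x i) ^ 2 ≤ T * q / (slack A b x i) ^ 2 :=
              div_le_div_of_nonneg_right hCS hs2.le
          _ = (T / (slack A b x i) ^ 2) * q := by ring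
          _ ≤ Real.sqrt ((m : ℝ) / d) * q := mul_le_mul_of_nonneg_right hθ hq0
    _ = Real.sqrt (Real.sqrt ((m : ℝ) / d)) * Real.sqrt q :=
        Real.sqrt_mul (Real.sqrt_nonneg _) _
    _ = ((m : ℝ) / d) ^ ((1 : ℝ) / 4) * vNorm A b x v := by
        rw [hVnorm]
        congr 1
        rw [Real.sqrt_eq_rpow, Real.sqrt_eq_rpow, ← Real.rpow_mul hmd0]
        norm_num



end PolytopeWalks
end
end
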